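/- arXiv:1904.12776 — 6 statements merged into one kernel-verified Lean document; each statement's English description precedes it below -/
import Mathlib

section
/- Let $k, m$ be positive integers with $\gcd(k,m)=1$, and let $f(X) = C_0 X + C_1 X^{2^k} + C_2 X^{2^{2k}} + \cdots + C_d X^{2^{dk}} \in \mathbb{F}_{2^m}[X]$ be a nonzero polynomial of degree $2^{dk}$ (so $C_d \neq 0$). Then $f$ has at most $2^d$ roots in $\mathbb{F}_{2^m}$. -/
open Finset

lemma bezout' (k m : ℕ) (hk : 0 < k) (hm : 0 < m) (hgcd : Nat.gcd k m = 1) :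
    ∃ a b : ℕ, a * k = 1 + b * m := by
  rcases eq_or_lt_of_le (show 1 ≤ m from hm) with h1 | h1
  · exact ⟨1, k - 1, by subst h1; omega⟩
  · haveI : NeZero m := ⟨by omega⟩
    haveI : Fact (1 < m) := ⟨h1⟩
    set a := ((k : ZMod m)⁻¹).val with ha
    have hku : IsUnit (k : ZMod m) := by
      rw [ZMod.isUnit_iff_coprime]; exact hgcd
    have h2 : ((a * k : ℕ) : ZMod m) = 1 := by
      push_cast [ha]
      rw [ZMod.natCast_val, ZMod.cast_id]
      exact ZMod.inv_mul_of_unit _ hku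
    have h3 : (a * k) % m = 1 := by
      have h4 : ((a*k) % m : ℕ) = ZMod.val ((a*k : ℕ) : ZMod m) := (ZMod.val_natCast m _).symm
      rw [h2] at h4
      rw [h4, ZMod.val_one]
    have hdm := Nat.div_add_mod (a*k) m
    rw [h3] at hdm
    exact ⟨a, (a*k)/m, by rw [mul_comm ((a*k)/m) m, add_comm 1 (m * ((a*k)/m))]; exact hdm.symm⟩

lemma iter_fix {F : Type*} [Monoid F] (e : ℕ) (y : F) (h : y ^ (2^e) = y) :
    ∀ n, y ^ (2^(n*e)) = y := by
  intro n
  induction n with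
  | zero => simp
  | succ n ihn =>
    have : (n+1)*e = n*e + e := by ring
    rw [this, pow_add, pow_mul, ihn, h]

lemma hfix_gal (m k : ℕ) (hm : 0 < m) (hk : 0 < k) (hgcd : Nat.gcd k m = 1)
    (x : GaloisField 2 m) (hx : x ^ (2^k) = x) : x = 0 ∨ x = 1 := by
  obtain ⟨a, b, hab⟩ := bezout' k m hk hm hgcd
  haveI : Finite (GaloisField 2 m) :=
    Nat.finite_of_card_ne_zero (by rw [GaloisField.card 2 m (by omega)]; positivity)
  haveI : Fintype (GaloisField 2 m) := Fintype.ofFinite _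
  have hcardpow : ∀ y : GaloisField 2 m, y ^ (2^m) = y := by
    intro y
    have h1 := FiniteField.pow_card y
    rwa [← Nat.card_eq_fintype_card, GaloisField.card 2 m (by omega)] at h1
  have h2 : x ^ (2^(a*k)) = x := iter_fix k x hx a
  have h3 : (x^2) ^ (2^(b*m)) = x^2 := iter_fix m (x^2) (by rw [← pow_mul, mul_comm, pow_mul, hcardpow]) b
  have h4 : x ^ (2^(a*k)) = x^2 := by
    calc x ^ (2^(a*k)) = x ^ (2 * 2^(b*m)) := by rw [hab, pow_add, pow_one]
      _ = (x^2) ^ (2^(b*m)) := by rw [pow_mul]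
      _ = x^2 := h3
  have hx2 : x ^ 2 = x := by rw [← h4, h2]
  have h5 : x * (x - 1) = 0 := by linear_combination hx2
  rcases mul_eq_zero.mp h5 with h | h
  · exact Or.inl h
  · exact Or.inr (sub_eq_zero.mp h)

section Key
variable {F : Type*} [Field F] [Finite F] [CharP F 2]

lemma key (k : ℕ) (hk : 0 < k)
    (hfix : ∀ x : F, x ^ (2^k) = x → x = 0 ∨ x = 1) :
    ∀ (d : ℕ) (a : ℕ → F), a d ≠ 0 →
      {x : F | ∑ i ∈ Finset.range (d+1), a i * x ^ (2^(i*k)) = 0}.ncard ≤ 2 ^ d := by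
  intro d
  induction d with
  | zero =>
    intro a ha
    have hset : {x : F | ∑ i ∈ Finset.range 1, a i * x ^ (2^(i*k)) = 0} = {0} := by
      ext x
      simp only [Finset.sum_range_one, Nat.zero_mul, pow_zero, pow_one, Set.mem_setOf_eq,
        Set.mem_singleton_iff, mul_eq_zero]
      exact ⟨fun h => h.resolve_left ha, fun h => Or.inr h⟩
    rw [hset]; simp
  | succ d ih =>
    intro a ha
    set S : Set F := {x : F | ∑ i ∈ Finset.range (d+1+1), a i * x ^ (2^(i*k)) = 0} with hS
    by_cases hall : ∀ x ∈ S, x = (0 : F)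
    · calc S.ncard ≤ ({0} : Set F).ncard :=
            Set.ncard_le_ncard (fun x hx => hall x hx) (Set.finite_singleton 0)
        _ = 1 := Set.ncard_singleton 0
        _ ≤ 2 ^ (d+1) := Nat.one_le_two_pow
    · push_neg at hall
      obtain ⟨v, hvS, hv0⟩ := hall
      classical
      set b : ℕ → F := fun i => a i * v ^ (2^(i*k)) with hb
      have hbsum : ∑ i ∈ Finset.range (d+2), b i = 0 := by
        have h0 := hvS
        simp only [hS, Set.mem_setOf_eq] at h0
        exact h0
      set c : ℕ → F := fun j => ∑ i ∈ Finset.range (j+1), b i with hc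
      have h2F : (2 : F) = 0 := by exact_mod_cast CharP.cast_eq_zero F 2
      -- telescoping identity
      have htel : ∀ (n : ℕ) (x : F),
          ∑ i ∈ Finset.range (n+1), b i * x ^ (2^(i*k)) =
            (∑ j ∈ Finset.range n, c j * (x ^ (2^((j+1)*k)) + x ^ (2^(j*k))))
              + c n * x ^ (2^(n*k)) := by
        intro n
        induction n with
        | zero => intro x; simp [hc]
        | succ n ihn =>
          intro x
          have hcn : c (n+1) = c n + b (n+1) := by
            simp [hc, Finset.sum_range_succ]
          rw [Finset.sum_range_succ, ihn, Finset.sum_range_succ, hcn]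
          linear_combination (-(c n * x ^ (2^((n+1)*k)))) * h2F
      have hcd1 : c (d+1) = 0 := hbsum
      have hcd : c d = b (d+1) := by
        have : c d + b (d+1) = 0 := by rw [← hcd1]; simp [hc, Finset.sum_range_succ]
        linear_combination this - (b (d+1)) * h2F
      have hcdne : c d ≠ 0 := by
        rw [hcd, hb]
        exact mul_ne_zero ha (pow_ne_zero _ hv0)
      set S' : Set F := {y : F | ∑ j ∈ Finset.range (d+1), c j * y ^ (2^(j*k)) = 0} with hS'
      have hIH : S'.ncard ≤ 2 ^ d := ih c hcdne
      set φ : F → F := fun x => (x * v⁻¹) ^ (2^k) + (x * v⁻¹) with hφ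
      -- transform: for x ∈ S, φ x ∈ S'
      have hpow : ∀ (u : F) (j : ℕ),
          (u ^ (2^k) + u) ^ (2^(j*k)) = u ^ (2^((j+1)*k)) + u ^ (2^(j*k)) := by
        intro u j
        rw [add_pow_char_pow, ← pow_mul, ← pow_add]
        congr 2
        ring
      have hmaps : ∀ x ∈ S, φ x ∈ S' := by
        intro x hx
        have hbu : ∑ i ∈ Finset.range (d+2), b i * (x * v⁻¹) ^ (2^(i*k)) = 0 := by
          have hxv : ∀ i : ℕ, b i * (x * v⁻¹) ^ (2^(i*k)) = a i * x ^ (2^(i*k)) := by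
            intro i
            rw [hb]
            have : v ^ (2^(i*k)) * (x * v⁻¹) ^ (2^(i*k)) = (v * (x * v⁻¹)) ^ (2^(i*k)) :=
              (mul_pow _ _ _).symm
            rw [mul_assoc, this, mul_comm x v⁻¹, ← mul_assoc v v⁻¹ x,
              mul_inv_cancel₀ hv0, one_mul]
          simp only [hxv]
          exact hx
        have h6 := htel (d+1) (x * v⁻¹)
        rw [hbu, hcd1, zero_mul, add_zero] at h6
        simp only [hS', Set.mem_setOf_eq, hφ]
        calc ∑ j ∈ Finset.range (d+1), c j * ((x*v⁻¹) ^ (2^k) + (x*v⁻¹)) ^ (2^(j*k))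
            = ∑ j ∈ Finset.range (d+1), c j * ((x*v⁻¹) ^ (2^((j+1)*k)) + (x*v⁻¹) ^ (2^(j*k))) := by
              apply Finset.sum_congr rfl; intro j _; rw [hpow]
          _ = 0 := h6.symm
      -- fibers have at most 2 elements
      have hfib : ∀ x₁ x₂ : F, φ x₁ = φ x₂ → x₁ = x₂ ∨ x₁ = x₂ + v := by
        intro x₁ x₂ h
        set w : F := (x₁ - x₂) * v⁻¹ with hw
        have hwfix : w ^ (2^k) = w := by
          have hadd : w = x₁ * v⁻¹ + x₂ * v⁻¹ := by
            rw [hw]; linear_combination (-(x₂ * v⁻¹)) * h2F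
          have : w ^ (2^k) + w = 0 := by
            rw [hadd, add_pow_char_pow]
            simp only [hφ] at h
            linear_combination h + ((x₂*v⁻¹)^(2^k) + x₂*v⁻¹) * h2F
          linear_combination this - w * h2F
        rcases hfix w hwfix with h0 | h1
        · left
          have : x₁ - x₂ = 0 := by
            have := mul_eq_zero.mp (hw ▸ h0)
            rcases this with h' | h'
            · exact h'
            · exact absurd h' (inv_ne_zero hv0)
          exact sub_eq_zero.mp this
        · right
          have hx12 : x₁ - x₂ = v := by
            have h7 : (x₁ - x₂) * v⁻¹ * v = 1 * v := by rw [← hw, h1]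
            rwa [mul_assoc, inv_mul_cancel₀ hv0, mul_one, one_mul] at h7
          rw [← hx12]; ring
      -- counting
      have hSfin : S.Finite := Set.toFinite S
      have hS'fin : S'.Finite := Set.toFinite S'
      have hcount : hSfin.toFinset.card ≤ 2 * hS'fin.toFinset.card := by
        apply Finset.card_le_mul_card_image_of_maps_to
          (f := φ) (t := hS'fin.toFinset)
        · intro x hx
          rw [Set.Finite.mem_toFinset] at *
          exact hmaps x hx
        · intro y _
          by_cases hne : ({x ∈ hSfin.toFinset | φ x = y} : Finset F).Nonempty
          · obtain ⟨x₀, hx₀⟩ := hne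
            have hx₀' : φ x₀ = y := (Finset.mem_filter.mp hx₀).2
            have hsub : ({x ∈ hSfin.toFinset | φ x = y} : Finset F) ⊆ {x₀, x₀ + v} := by
              intro x hx
              have hx' : φ x = y := (Finset.mem_filter.mp hx).2
              have := hfib x x₀ (by rw [hx', hx₀'])
              rcases this with h | h
              · simp [h]
              · simp [h]
            calc ({x ∈ hSfin.toFinset | φ x = y} : Finset F).card
                ≤ ({x₀, x₀ + v} : Finset F).card := Finset.card_le_card hsub
              _ ≤ 2 := le_trans (Finset.card_insert_le _ _) (by simp)
          · rw [Finset.not_nonempty_iff_eq_empty] at hne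
            rw [hne]; simp
      calc S.ncard = hSfin.toFinset.card := Set.ncard_eq_toFinset_card _ hSfin
        _ ≤ 2 * hS'fin.toFinset.card := hcount
        _ = 2 * S'.ncard := by rw [Set.ncard_eq_toFinset_card _ hS'fin]
        _ ≤ 2 * 2^d := by omega
        _ = 2 ^ (d+1) := by ring

end Key

/-- A linearized polynomial
`f(X) = C₀X + C₁X^(2^k) + ⋯ + C_d X^(2^(dk))` over `𝔽_{2^m}` with `C_d ≠ 0` and
`gcd(k,m)=1` has at most `2^d` roots in `𝔽_{2^m}`. -/
theorem stmt2 (m k d : ℕ) (hm : 0 < m) (hk : 0 < k) (hgcd : Nat.gcd k m = 1)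
    (C : ℕ → GaloisField 2 m) (hCd : C d ≠ 0)
    (f : Polynomial (GaloisField 2 m))
    (hf : f = ∑ i ∈ Finset.range (d + 1), Polynomial.C (C i) * Polynomial.X ^ (2 ^ (i * k))) :
    {x : GaloisField 2 m | f.eval x = 0}.ncard ≤ 2 ^ d := by
  haveI : Finite (GaloisField 2 m) :=
    Nat.finite_of_card_ne_zero (by rw [GaloisField.card 2 m (by omega)]; positivity)
  have hset : {x : GaloisField 2 m | f.eval x = 0}
      = {x : GaloisField 2 m | ∑ i ∈ Finset.range (d+1), C i * x ^ (2^(i*k)) = 0} := by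
    ext x
    simp [hf, Polynomial.eval_finset_sum]
  rw [hset]
  exact key k hk (fun x hx => hfix_gal m k hm hk hgcd x hx) d C hCd
end

section
/- Let $k, m$ be positive integers with $\gcd(k,m)=1$, and let $f_1, f_2 \in \mathbb{F}_{2^m}[X,Y]$ be linearized polynomials of the form $\sum_{i} (C_i X^{2^{ik}} + D_i Y^{2^{ik}})$ of degrees $2^{d_1 k}$ and $2^{d_2 k}$ respectively. If $f_1$ and $f_2$ have no common nonconstant factor, then the number of common zeros of $f_1$ and $f_2$ in $\mathbb{F}_{2^m} \times \mathbb{F}_{2^m}$ is at most $2^{d_1 + d_2}$. -/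
open Polynomial Finset

set_option linter.unusedSectionVars false
set_option linter.unusedVariables false

variable {F : Type*} [Field F] [Fintype F] [DecidableEq F] [CharP F 2]



lemma pow_two_pow_mul (x : F) {k : ℕ} (hx : x ^ (2^k) = x) : ∀ b, x ^ (2^(k*b)) = x := by
  intro b
  induction b with
  | zero => simp
  | succ b ih =>
    have : 2 ^ (k * (b+1)) = 2 ^ (k*b) * 2 ^ k := by rw [← pow_add]; ring_nf
    rw [this, pow_mul, ih, hx]

lemma lemA {m k : ℕ} (hm : 0 < m) (hk : 0 < k) (hgcd : Nat.gcd k m = 1)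
    (hcard : Fintype.card F = 2^m) (x : F) (hx : x ^ (2^k) = x) : x = 0 ∨ x = 1 := by
  have hxm : x ^ (2^m) = x := by
    have := FiniteField.pow_card x
    rwa [hcard] at this
  have hsq : x ^ 2 = x := by
    rcases eq_or_lt_of_le (show 1 ≤ m from hm) with h1 | h1
    · rw [← h1] at hxm; simpa using hxm
    · obtain ⟨b, -, hb⟩ := Nat.exists_mul_mod_eq_one_of_coprime hgcd h1
      have h1' : k * b = m * (k * b / m) + 1 := by
        conv_lhs => rw [← Nat.div_add_mod (k*b) m]
        rw [hb]
      have e1 : x ^ (2 ^ (k * b)) = x := pow_two_pow_mul x hx b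
      have e2 : x ^ (2 ^ (m * (k * b / m) + 1)) = x ^ 2 := by
        rw [pow_succ, pow_mul, pow_two_pow_mul x hxm]
      rw [h1', e2] at e1
      exact e1
  have : x * (x - 1) = 0 := by
    have : x ^ 2 - x = 0 := by rw [hsq]; ring
    calc x * (x-1) = x^2 - x := by ring
    _ = 0 := this
  rcases mul_eq_zero.mp this with h | h
  · exact Or.inl h
  · exact Or.inr (by have := sub_eq_zero.mp h; exact this)


def Nfun (k e : ℕ) (h : ℕ → F) (x : F) : F := ∑ i ∈ range (e+1), h i * x ^ (2^(i*k))

lemma Nfun_add (k e : ℕ) (h : ℕ → F) (x y : F) :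
    Nfun k e h (x + y) = Nfun k e h x + Nfun k e h y := by
  unfold Nfun
  rw [← Finset.sum_add_distrib]
  refine Finset.sum_congr rfl fun i _ => ?_
  rw [add_pow_char_pow, mul_add]

lemma Nfun_zero (k e : ℕ) (h : ℕ → F) : Nfun k e h 0 = 0 := by
  unfold Nfun
  refine Finset.sum_eq_zero fun i _ => ?_
  rw [zero_pow (by positivity), mul_zero]

set_option linter.unusedSectionVars false

set_option maxHeartbeats 1000000 in
lemma lemB' {m k : ℕ} (hm : 0 < m) (hk : 0 < k) (hgcd : Nat.gcd k m = 1)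
    (hcard : Fintype.card F = 2^m) :
    ∀ (e : ℕ) (h : ℕ → F), (∃ i, i ≤ e ∧ h i ≠ 0) →
    (Finset.univ.filter (fun x : F => Nfun k e h x = 0)).card ≤ 2 ^ e := by
  intro e
  induction e with
  | zero =>
    intro h hne
    obtain ⟨i, hi, hne⟩ := hne
    interval_cases i
    have hsub : (Finset.univ.filter (fun x : F => Nfun k 0 h x = 0)) ⊆ {0} := by
      intro x hx
      simp only [Finset.mem_filter, Finset.mem_univ, true_and] at hx
      unfold Nfun at hx
      norm_num [Finset.sum_range_one] at hx
      simp [hx.resolve_left hne]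
    calc _ ≤ ({0} : Finset F).card := Finset.card_le_card hsub
    _ ≤ 1 := by simp
    _ ≤ 2^0 := by norm_num
  | succ e ih =>
    intro h hne
    by_cases hker : ∀ x : F, Nfun k (e+1) h x = 0 → x = 0
    · have hsub : (Finset.univ.filter (fun x : F => Nfun k (e+1) h x = 0)) ⊆ {0} := by
        intro x hx
        simp only [Finset.mem_filter, Finset.mem_univ, true_and] at hx
        simp [hker x hx]
      calc _ ≤ ({0} : Finset F).card := Finset.card_le_card hsub
      _ ≤ 1 := by simp
      _ ≤ 2^(e+1) := Nat.one_le_two_pow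
    · push_neg at hker
      obtain ⟨x₀, hx₀, hx₀ne⟩ := hker
      set c : F := x₀ ^ (2^k) / x₀ with hc_def
      have hc0 : c ≠ 0 := div_ne_zero (pow_ne_zero _ hx₀ne) hx₀ne
      set D : F → F := fun x => x ^ (2^k) + c * x with hD_def
      have hDx₀ : D x₀ = 0 := by
        show x₀ ^ (2^k) + c * x₀ = 0
        rw [hc_def, div_mul_cancel₀ _ hx₀ne]
        exact CharTwo.add_self_eq_zero _
      have hDadd : ∀ x y : F, D (x + y) = D x + D y := by
        intro x y
        simp only [hD_def]
        rw [add_pow_char_pow]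
        ring
      -- kernel of D has at most two elements
      have hDker : ∀ z w : F, D z = 0 → D w = 0 → z ≠ 0 → w ≠ 0 → z = w := by
        intro z w hz hw hz0 hw0
        have hz' : z ^ (2^k) = c * z := by
          have := hz; simp only [hD_def] at this
          have h2 : z ^ (2^k) + c * z + c * z = c * z := by rw [this]; ring
          rwa [add_assoc, CharTwo.add_self_eq_zero, add_zero] at h2
        have hw' : w ^ (2^k) = c * w := by
          have := hw; simp only [hD_def] at this
          have h2 : w ^ (2^k) + c * w + c * w = c * w := by rw [this]; ring
          rwa [add_assoc, CharTwo.add_self_eq_zero, add_zero] at h2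
        have hq : (z / w) ^ (2^k) = z / w := by
          rw [div_pow, hz', hw', mul_div_mul_left _ _ hc0]
        rcases lemA hm hk hgcd hcard _ hq with h0 | h1
        · exact absurd (div_eq_zero_iff.mp h0) (by simp [hz0, hw0])
        · exact (div_eq_one_iff_eq hw0).mp h1
      -- the quotient coefficients
      set Q : ℕ → F := fun j => Nat.rec (h (e+1))
        (fun j ihq => h (e - j) + ihq * c ^ (2 ^ ((e - j) * k))) j with hQ_def
      set q : ℕ → F := fun i => Q (e - i) with hq_def
      have hq_top : q e = h (e+1) := by simp [hq_def, hQ_def]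
      have hq_rec : ∀ i, i < e → q i = h (i+1) + q (i+1) * c ^ (2^((i+1)*k)) := by
        intro i hi
        have h1 : e - i = (e - (i+1)) + 1 := by omega
        have h2 : e - (e - (i+1)) = i + 1 := by omega
        show Q (e - i) = _
        rw [h1]
        show h (e - (e - (i+1))) + Q (e - (i+1)) * c ^ (2 ^ ((e - (e - (i+1))) * k)) = _
        rw [h2]
      set r : F := h 0 + q 0 * c with hr_def
      have hpow : ∀ i : ℕ, (2:ℕ)^k * 2^(i*k) = 2^((i+1)*k) := by
        intro i
        rw [← pow_add]
        congr 1
        ring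
      have hDpow : ∀ (x : F) (i : ℕ),
          (D x) ^ (2^(i*k)) = x^(2^((i+1)*k)) + c^(2^(i*k)) * x^(2^(i*k)) := by
        intro x i
        simp only [hD_def]
        rw [add_pow_char_pow, mul_pow, ← pow_mul, hpow]
      have key : ∀ x : F, Nfun k (e+1) h x = Nfun k e q (D x) + r * x := by
        intro x
        unfold Nfun
        rw [Finset.sum_range_succ' (fun i => h i * x ^ (2^(i*k)))]
        simp only [hDpow, mul_add]
        rw [Finset.sum_add_distrib]
        rw [Finset.sum_range_succ (fun i => q i * x ^ (2^((i+1)*k)))]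
        rw [Finset.sum_range_succ' (fun i => q i * (c ^ (2^(i*k)) * x ^ (2^(i*k))))]
        rw [Finset.sum_range_succ (fun i => h (i+1) * x ^ (2^((i+1)*k)))]
        simp only [Nat.zero_mul, pow_zero, pow_one, hq_top, hr_def]
        have hcomb : ∑ i ∈ range e, q i * x ^ (2^((i+1)*k))
            + ∑ i ∈ range e, q (i+1) * (c ^ (2^((i+1)*k)) * x ^ (2^((i+1)*k)))
            = ∑ i ∈ range e, h (i+1) * x ^ (2^((i+1)*k)) := by
          rw [← Finset.sum_add_distrib]
          refine Finset.sum_congr rfl fun i hi => ?_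
          rw [hq_rec i (Finset.mem_range.mp hi)]
          calc (h (i+1) + q (i+1) * c ^ (2^((i+1)*k))) * x ^ (2^((i+1)*k))
              + q (i+1) * (c ^ (2^((i+1)*k)) * x ^ (2^((i+1)*k)))
              = h (i+1) * x ^ (2^((i+1)*k))
                + (q (i+1) * c ^ (2^((i+1)*k)) * x ^ (2^((i+1)*k))
                   + q (i+1) * c ^ (2^((i+1)*k)) * x ^ (2^((i+1)*k))) := by ring
          _ = h (i+1) * x ^ (2^((i+1)*k)) := by
                rw [CharTwo.add_self_eq_zero, add_zero]
        have htwo : (2:F) = 0 := CharTwo.two_eq_zero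
        linear_combination - hcomb - (q 0 * c * x) * htwo
      -- r = 0
      have hr0 : r = 0 := by
        have := key x₀
        rw [hx₀, hDx₀, Nfun_zero, zero_add] at this
        rcases mul_eq_zero.mp this.symm with h' | h'
        · exact h'
        · exact absurd h' hx₀ne
      -- q is nonzero
      have hqne : ∃ i, i ≤ e ∧ q i ≠ 0 := by
        by_contra hcon
        push_neg at hcon
        obtain ⟨i, hi, hine⟩ := hne
        have hzero : ∀ j, j ≤ e + 1 → h j = 0 := by
          intro j hj
          rcases Nat.eq_zero_or_pos j with rfl | hjpos
          · have : h 0 + q 0 * c = 0 := by rw [← hr_def, hr0]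
            rw [hcon 0 (by omega), zero_mul, add_zero] at this
            exact this
          · rcases Nat.lt_or_ge j (e+1) with hj' | hj'
            · obtain ⟨j', rfl⟩ := Nat.exists_eq_succ_of_ne_zero (by omega : j ≠ 0)
              have := hq_rec j' (by omega)
              rw [hcon j' (by omega), hcon (j'+1) (by omega), zero_mul, add_zero] at this
              exact this.symm
            · have : j = e + 1 := by omega
              subst this
              rw [← hq_top, hcon e (by omega)]
        exact hine (hzero i hi)
      -- counting
      have hsub2 : ∀ x : F, Nfun k (e+1) h x = 0 → Nfun k e q (D x) = 0 := by
        intro x hx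
        have := key x
        rw [hx, hr0, zero_mul, add_zero] at this
        exact this.symm
      set S := Finset.univ.filter (fun x : F => Nfun k (e+1) h x = 0) with hS
      set T := Finset.univ.filter (fun z : F => Nfun k e q z = 0) with hT
      have himg : S.image D ⊆ T := by
        intro z hz
        obtain ⟨x, hx, rfl⟩ := Finset.mem_image.mp hz
        simp only [hS, Finset.mem_filter, Finset.mem_univ, true_and] at hx
        simp only [hT, Finset.mem_filter, Finset.mem_univ, true_and]
        exact hsub2 x hx
      have hfib : ∀ a ∈ S.image D, (S.filter fun x => D x = a).card ≤ 2 := by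
        intro a _
        rcases Finset.eq_empty_or_nonempty (S.filter fun x => D x = a) with he | ⟨x₁, hx₁⟩
        · simp [he]
        · have hsub3 : (S.filter fun x => D x = a) ⊆ {x₁, x₁ + x₀} := by
            intro y hy
            simp only [Finset.mem_filter] at hy hx₁
            have hdiff : D (y + x₁) = 0 := by
              rw [hDadd, hy.2, hx₁.2, CharTwo.add_self_eq_zero]
            rcases eq_or_ne (y + x₁) 0 with h0 | h0
            · rw [CharTwo.add_eq_iff_eq_add, zero_add] at h0
              simp [h0]
            · have := hDker _ _ hdiff hDx₀ h0 hx₀ne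
              have hy' : y = x₁ + x₀ := by
                have h2 : y + x₁ = x₀ := this
                have : y + x₁ + x₁ = x₀ + x₁ := by rw [h2]
                rwa [add_assoc, CharTwo.add_self_eq_zero, add_zero, add_comm x₀ x₁] at this
              simp [hy']
          calc (S.filter fun x => D x = a).card ≤ ({x₁, x₁ + x₀} : Finset F).card :=
            Finset.card_le_card hsub3
          _ ≤ 2 := Finset.card_insert_le _ _ |>.trans (by simp)
      have hScard : S.card ≤ 2 * (S.image D).card :=
        Finset.card_le_mul_card_image_of_maps_to (fun a => Finset.mem_image_of_mem D) 2 hfib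
      have hTcard : (S.image D).card ≤ 2 ^ e := le_trans (Finset.card_le_card himg) (ih q hqne)
      calc S.card ≤ 2 * (S.image D).card := hScard
      _ ≤ 2 * 2^e := by omega
      _ = 2^(e+1) := by ring

lemma lemC' {m k : ℕ} (hm : 0 < m) (hk : 0 < k) (hgcd : Nat.gcd k m = 1)
    (hcard : Fintype.card F = 2^m) (e : ℕ) (h : ℕ → F) (hne : ∃ i, i ≤ e ∧ h i ≠ 0) (t : F) :
    (Finset.univ.filter (fun x : F => Nfun k e h x = t)).card ≤ 2 ^ e := by
  rcases Finset.eq_empty_or_nonempty (Finset.univ.filter (fun x : F => Nfun k e h x = t)) with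
    he | ⟨y₀, hy₀⟩
  · simp [he]
  · simp only [Finset.mem_filter, Finset.mem_univ, true_and] at hy₀
    have hsub : (Finset.univ.filter (fun x : F => Nfun k e h x = t)) ⊆
        (Finset.univ.filter (fun x : F => Nfun k e h x = 0)).image (· + y₀) := by
      intro y hy
      simp only [Finset.mem_filter, Finset.mem_univ, true_and] at hy
      refine Finset.mem_image.mpr ⟨y + y₀, ?_, ?_⟩
      · simp only [Finset.mem_filter, Finset.mem_univ, true_and]
        rw [Nfun_add, hy, hy₀, CharTwo.add_self_eq_zero]
      · rw [add_assoc, CharTwo.add_self_eq_zero, add_zero]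
    calc _ ≤ ((Finset.univ.filter (fun x : F => Nfun k e h x = 0)).image (· + y₀)).card :=
        Finset.card_le_card hsub
    _ ≤ (Finset.univ.filter (fun x : F => Nfun k e h x = 0)).card := Finset.card_image_le
    _ ≤ 2 ^ e := lemB' hm hk hgcd hcard e h hne

noncomputable section

variable (k : ℕ)

def evalN (p : Polynomial F) (x : F) : F := p.sum fun i a => a * x ^ (2^(i*k))

def mvL (p : Polynomial F) : MvPolynomial (Fin 2) F :=
  p.sum fun i a => MvPolynomial.C a * MvPolynomial.X 0 ^ (2^(i*k))

def mvM (p : Polynomial F) : MvPolynomial (Fin 2) F :=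
  p.sum fun i a => MvPolynomial.C a * MvPolynomial.X 1 ^ (2^(i*k))

def mvP (p q : Polynomial F) : MvPolynomial (Fin 2) F := mvL k p + mvM k q

def tw (c : F) (s : ℕ) (p : Polynomial F) : Polynomial F :=
  ∑ i ∈ range (p.natDegree + 1), Polynomial.monomial (i+s) (c * (p.coeff i) ^ (2^(s*k)))

variable {k}

lemma evalN_zero (x : F) : evalN k (0 : Polynomial F) x = 0 := Polynomial.sum_zero_index _

lemma evalN_add (p q : Polynomial F) (x : F) :
    evalN k (p + q) x = evalN k p x + evalN k q x :=
  Polynomial.sum_add_index p q _ (fun _ => by simp) (fun _ _ _ => by rw [add_mul])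

lemma evalN_monomial (n : ℕ) (a : F) (x : F) :
    evalN k (Polynomial.monomial n a) x = a * x ^ (2^(n*k)) :=
  Polynomial.sum_monomial_index a _ (by simp)

lemma evalN_eq_range (p : Polynomial F) {n : ℕ} (hn : p.natDegree < n) (x : F) :
    evalN k p x = ∑ i ∈ range n, p.coeff i * x ^ (2^(i*k)) :=
  Polynomial.sum_over_range' p (fun _ => by simp) n hn

lemma evalN_eq_Nfun (p : Polynomial F) (x : F) :
    evalN k p x = Nfun k p.natDegree p.coeff x :=
  evalN_eq_range p (Nat.lt_succ_self _) x

lemma mvL_zero : mvL k (0 : Polynomial F) = 0 := Polynomial.sum_zero_index _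

lemma mvM_zero : mvM k (0 : Polynomial F) = 0 := Polynomial.sum_zero_index _

lemma mvL_add (p q : Polynomial F) : mvL k (p + q) = mvL k p + mvL k q :=
  Polynomial.sum_add_index p q _ (fun _ => by simp) (fun _ _ _ => by rw [map_add, add_mul])

lemma mvM_add (p q : Polynomial F) : mvM k (p + q) = mvM k p + mvM k q :=
  Polynomial.sum_add_index p q _ (fun _ => by simp) (fun _ _ _ => by rw [map_add, add_mul])

lemma mvL_monomial (n : ℕ) (a : F) :
    mvL k (Polynomial.monomial n a) = MvPolynomial.C a * MvPolynomial.X 0 ^ (2^(n*k)) :=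
  Polynomial.sum_monomial_index a _ (by simp)

lemma mvM_monomial (n : ℕ) (a : F) :
    mvM k (Polynomial.monomial n a) = MvPolynomial.C a * MvPolynomial.X 1 ^ (2^(n*k)) :=
  Polynomial.sum_monomial_index a _ (by simp)

lemma mvL_eq_range (p : Polynomial F) {n : ℕ} (hn : p.natDegree < n) :
    mvL k p = ∑ i ∈ range n, MvPolynomial.C (p.coeff i) * MvPolynomial.X 0 ^ (2^(i*k)) :=
  Polynomial.sum_over_range' p (fun _ => by simp) n hn

lemma mvM_eq_range (p : Polynomial F) {n : ℕ} (hn : p.natDegree < n) :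
    mvM k p = ∑ i ∈ range n, MvPolynomial.C (p.coeff i) * MvPolynomial.X 1 ^ (2^(i*k)) :=
  Polynomial.sum_over_range' p (fun _ => by simp) n hn

lemma eval_mvP (p q : Polynomial F) (x y : F) :
    MvPolynomial.eval ![x, y] (mvP k p q) = evalN k p x + evalN k q y := by
  unfold mvP
  rw [map_add]
  congr 1
  · rw [mvL_eq_range p (Nat.lt_succ_self _), evalN_eq_range p (Nat.lt_succ_self _), map_sum]
    refine Finset.sum_congr rfl fun i _ => ?_
    simp
  · rw [mvM_eq_range q (Nat.lt_succ_self _), evalN_eq_range q (Nat.lt_succ_self _), map_sum]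
    refine Finset.sum_congr rfl fun i _ => ?_
    simp

lemma constantCoeff_mvP (p q : Polynomial F) :
    MvPolynomial.constantCoeff (mvP k p q) = 0 := by
  unfold mvP
  rw [map_add, mvL_eq_range p (Nat.lt_succ_self _), mvM_eq_range q (Nat.lt_succ_self _),
    map_sum, map_sum]
  rw [Finset.sum_eq_zero, Finset.sum_eq_zero, add_zero]
  all_goals
    intro i _
    rw [map_mul, map_pow, MvPolynomial.constantCoeff_X, zero_pow (by positivity), mul_zero]


lemma coeff_tw (c : F) (s : ℕ) (p : Polynomial F) (j : ℕ) :
    (tw k c s p).coeff j = if s ≤ j then c * (p.coeff (j-s)) ^ (2^(s*k)) else 0 := by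
  unfold tw
  rw [Polynomial.finset_sum_coeff]
  by_cases hs : s ≤ j
  · by_cases hj : j - s ≤ p.natDegree
    · rw [Finset.sum_eq_single (j - s)]
      · rw [Polynomial.coeff_monomial, if_pos (by omega), if_pos hs]
      · intro i hi hne
        rw [Polynomial.coeff_monomial, if_neg (by omega)]
      · intro hni
        exact absurd (Finset.mem_range.mpr (by omega)) hni
    · rw [Finset.sum_eq_zero, if_pos hs,
        Polynomial.coeff_eq_zero_of_natDegree_lt (by omega), zero_pow (by positivity), mul_zero]
      intro i hi
      have hi' := Finset.mem_range.mp hi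
      rw [Polynomial.coeff_monomial, if_neg (by omega)]

  · rw [Finset.sum_eq_zero, if_neg hs]
    intro i _
    rw [Polynomial.coeff_monomial, if_neg (by omega)]

lemma tw_zero (c : F) (s : ℕ) : tw k c s (0 : Polynomial F) = 0 := by
  unfold tw
  simp [zero_pow (show (2:ℕ)^(s*k) ≠ 0 by positivity)]

lemma evalN_finset_sum {ι : Type*} (t : Finset ι) (g : ι → Polynomial F) (x : F) :
    evalN k (∑ i ∈ t, g i) x = ∑ i ∈ t, evalN k (g i) x := by
  classical
  induction t using Finset.cons_induction with
  | empty => simp [evalN_zero]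
  | cons a t ha ih => rw [Finset.sum_cons, Finset.sum_cons, evalN_add, ih]

lemma mvL_finset_sum {ι : Type*} (t : Finset ι) (g : ι → Polynomial F) :
    mvL k (∑ i ∈ t, g i) = ∑ i ∈ t, mvL k (g i) := by
  classical
  induction t using Finset.cons_induction with
  | empty => simp [mvL_zero]
  | cons a t ha ih => rw [Finset.sum_cons, Finset.sum_cons, mvL_add, ih]

lemma mvM_finset_sum {ι : Type*} (t : Finset ι) (g : ι → Polynomial F) :
    mvM k (∑ i ∈ t, g i) = ∑ i ∈ t, mvM k (g i) := by
  classical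
  induction t using Finset.cons_induction with
  | empty => simp [mvM_zero]
  | cons a t ha ih => rw [Finset.sum_cons, Finset.sum_cons, mvM_add, ih]

lemma pow_exp_aux (i s : ℕ) : (2:ℕ)^(i*k) * 2^(s*k) = 2^((i+s)*k) := by
  rw [← pow_add]
  congr 1
  ring

lemma evalN_tw (c : F) (s : ℕ) (p : Polynomial F) (x : F) :
    evalN k (tw k c s p) x = c * (evalN k p x) ^ (2^(s*k)) := by
  unfold tw
  rw [evalN_finset_sum]
  simp only [evalN_monomial]
  rw [evalN_eq_range p (Nat.lt_succ_self _), sum_pow_char_pow, Finset.mul_sum]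
  refine Finset.sum_congr rfl fun i _ => ?_
  rw [mul_pow, ← pow_mul, pow_exp_aux]
  ring

lemma mvL_tw (c : F) (s : ℕ) (p : Polynomial F) :
    mvL k (tw k c s p) = MvPolynomial.C c * (mvL k p) ^ (2^(s*k)) := by
  unfold tw
  rw [mvL_finset_sum]
  simp only [mvL_monomial]
  rw [mvL_eq_range p (Nat.lt_succ_self _), sum_pow_char_pow, Finset.mul_sum]
  refine Finset.sum_congr rfl fun i _ => ?_
  rw [mul_pow, ← pow_mul, pow_exp_aux, ← map_pow, map_mul, mul_assoc]

lemma mvM_tw (c : F) (s : ℕ) (p : Polynomial F) :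
    mvM k (tw k c s p) = MvPolynomial.C c * (mvM k p) ^ (2^(s*k)) := by
  unfold tw
  rw [mvM_finset_sum]
  simp only [mvM_monomial]
  rw [mvM_eq_range p (Nat.lt_succ_self _), sum_pow_char_pow, Finset.mul_sum]
  refine Finset.sum_congr rfl fun i _ => ?_
  rw [mul_pow, ← pow_mul, pow_exp_aux, ← map_pow, map_mul, mul_assoc]

lemma mvP_tw (p₁ q₁ p₂ q₂ : Polynomial F) (c : F) (s : ℕ) :
    mvP k (p₁ + tw k c s p₂) (q₁ + tw k c s q₂)
      = mvP k p₁ q₁ + MvPolynomial.C c * (mvP k p₂ q₂) ^ (2^(s*k)) := by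
  unfold mvP
  rw [mvL_add, mvM_add, mvL_tw, mvM_tw, add_pow_char_pow]
  ring

lemma degree_tw_le (c : F) (s : ℕ) (p : Polynomial F) :
    (tw k c s p).degree ≤ p.degree + s := by
  rcases eq_or_ne p 0 with rfl | hp
  · rw [tw_zero]
    simp
  · refine le_trans (Polynomial.degree_sum_le _ _) ?_
    rw [Finset.sup_le_iff]
    intro i hi
    have hi' := Finset.mem_range.mp hi
    refine le_trans (Polynomial.degree_monomial_le _ _) ?_
    rw [Polynomial.degree_eq_natDegree hp, ← Nat.cast_add, Nat.cast_le]
    omega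

end

noncomputable section
variable {k : ℕ}

lemma X0_dvd_mvP (p : Polynomial F) :
    (MvPolynomial.X 0 : MvPolynomial (Fin 2) F) ∣ mvP k p 0 := by
  unfold mvP
  rw [mvM_zero, add_zero, mvL_eq_range p (Nat.lt_succ_self _)]
  refine Finset.dvd_sum fun i _ => ?_
  exact Dvd.dvd.mul_left (dvd_pow_self _ (by positivity)) _

lemma endCase {m : ℕ} (hm : 0 < m) (hk : 0 < k) (hgcd : Nat.gcd k m = 1)
    (hcard : Fintype.card F = 2^m)
    (f₁ f₂ : MvPolynomial (Fin 2) F) (V : Set (F × F)) (Dd : ℕ)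
    (L₁ L₂ M₂ : Polynomial F)
    (h1 : ∀ x y : F, (x,y) ∈ V ↔
      (evalN k L₁ x + evalN k (0:Polynomial F) y = 0 ∧ evalN k L₂ x + evalN k M₂ y = 0))
    (h2 : ∀ g : MvPolynomial (Fin 2) F, g ∣ mvP k L₁ 0 → g ∣ mvP k L₂ M₂ → g ∣ f₁ ∧ g ∣ f₂)
    (hd1 : L₁.degree + M₂.degree ≤ (Dd : WithBot ℕ)) :
    V.ncard ≤ 2 ^ Dd ∨
      ∃ g : MvPolynomial (Fin 2) F, g ∣ f₁ ∧ g ∣ f₂ ∧ MvPolynomial.constantCoeff g = 0 := by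
  by_cases hM₂ : M₂ = 0
  · subst hM₂
    right
    obtain ⟨hg1, hg2⟩ := h2 (MvPolynomial.X 0) (X0_dvd_mvP L₁) (X0_dvd_mvP L₂)
    refine ⟨_, hg1, hg2, ?_⟩
    simp
  by_cases hL₁ : L₁ = 0
  · right
    obtain ⟨hg1, hg2⟩ := h2 (mvP k L₂ M₂)
      (by
        subst hL₁
        unfold mvP
        rw [mvL_zero, mvM_zero, add_zero]
        exact dvd_zero _)
      dvd_rfl
    exact ⟨_, hg1, hg2, constantCoeff_mvP L₂ M₂⟩
  · left
    set S := Finset.univ.filter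
      (fun p : F × F => evalN k L₁ p.1 = 0 ∧ evalN k L₂ p.1 + evalN k M₂ p.2 = 0) with hS
    have hV : V = ↑S := by
      ext p
      rcases p with ⟨x, y⟩
      rw [h1 x y]
      simp only [hS, Finset.coe_filter, Set.mem_setOf_eq, Finset.mem_univ, true_and]
      rw [evalN_zero, add_zero]
    rw [hV, Set.ncard_coe_finset]
    set T := Finset.univ.filter (fun x : F => Nfun k L₁.natDegree L₁.coeff x = 0) with hT
    have hmaps : ∀ p ∈ S, p.1 ∈ T := by
      intro p hp
      simp only [hS, Finset.mem_filter, Finset.mem_univ, true_and] at hp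
      simp only [hT, Finset.mem_filter, Finset.mem_univ, true_and]
      rw [← evalN_eq_Nfun]
      exact hp.1
    have hfib : ∀ a ∈ T, (S.filter fun p => p.1 = a).card ≤ 2 ^ M₂.natDegree := by
      intro a _
      have hinj : ∀ p ∈ S.filter (fun p => p.1 = a), ∀ q ∈ S.filter (fun p => p.1 = a),
          p.2 = q.2 → p = q := by
        intro p hp q hq hpq
        simp only [Finset.mem_filter] at hp hq
        exact Prod.ext (hp.2.trans hq.2.symm) hpq
      have hmaps2 : ∀ p ∈ S.filter (fun p => p.1 = a),
          p.2 ∈ Finset.univ.filter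
            (fun y : F => Nfun k M₂.natDegree M₂.coeff y = evalN k L₂ a) := by
        intro p hp
        simp only [hS, Finset.mem_filter, Finset.mem_univ, true_and] at hp
        obtain ⟨⟨_, hp2⟩, hpa⟩ := hp
        simp only [Finset.mem_filter, Finset.mem_univ, true_and]
        rw [← evalN_eq_Nfun]
        rw [hpa] at hp2
        have h3 := congrArg (fun t => evalN k L₂ a + t) hp2.symm
        simp only [add_zero] at h3
        rw [← add_assoc, CharTwo.add_self_eq_zero, zero_add] at h3
        exact h3.symm
      calc (S.filter fun p => p.1 = a).card
          ≤ (Finset.univ.filter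
            (fun y : F => Nfun k M₂.natDegree M₂.coeff y = evalN k L₂ a)).card :=
            Finset.card_le_card_of_injOn Prod.snd hmaps2 (fun p hp q hq => hinj p hp q hq)
      _ ≤ 2 ^ M₂.natDegree := lemC' hm hk hgcd hcard _ _
            ⟨M₂.natDegree, le_refl _, Polynomial.leadingCoeff_ne_zero.mpr hM₂⟩ _
    have hScard : S.card ≤ 2 ^ M₂.natDegree * T.card :=
      Finset.card_le_mul_card_image_of_maps_to hmaps _ hfib
    have hTcard : T.card ≤ 2 ^ L₁.natDegree :=
      lemB' hm hk hgcd hcard _ _ ⟨L₁.natDegree, le_refl _, Polynomial.leadingCoeff_ne_zero.mpr hL₁⟩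
    have hDd : L₁.natDegree + M₂.natDegree ≤ Dd := by
      rw [Polynomial.degree_eq_natDegree hL₁, Polynomial.degree_eq_natDegree hM₂,
        ← Nat.cast_add, Nat.cast_le] at hd1
      exact hd1
    calc S.card ≤ 2 ^ M₂.natDegree * T.card := hScard
    _ ≤ 2 ^ M₂.natDegree * 2 ^ L₁.natDegree := Nat.mul_le_mul_left _ hTcard
    _ = 2 ^ (M₂.natDegree + L₁.natDegree) := (pow_add 2 _ _).symm
    _ ≤ 2 ^ Dd := Nat.pow_le_pow_right (by norm_num) (by omega)

end

noncomputable section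
variable {k : ℕ}

lemma stepCase {m : ℕ} (hm : 0 < m) (hk : 0 < k) (hgcd : Nat.gcd k m = 1)
    (hcard : Fintype.card F = 2^m)
    (f₁ f₂ : MvPolynomial (Fin 2) F) (V : Set (F × F)) (Dd : ℕ)
    (L₁ M₁ L₂ M₂ : Polynomial F) (hM₁ : M₁ ≠ 0) (hM₂ : M₂ ≠ 0)
    (hle : M₂.degree ≤ M₁.degree)
    (h1 : ∀ x y : F, (x,y) ∈ V ↔
      (evalN k L₁ x + evalN k M₁ y = 0 ∧ evalN k L₂ x + evalN k M₂ y = 0))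
    (h2 : ∀ g : MvPolynomial (Fin 2) F, g ∣ mvP k L₁ M₁ → g ∣ mvP k L₂ M₂ → g ∣ f₁ ∧ g ∣ f₂)
    (hd1 : L₁.degree + M₂.degree ≤ (Dd : WithBot ℕ))
    (hd2 : L₂.degree + M₁.degree ≤ (Dd : WithBot ℕ))
    (IH : ∀ A B C D : Polynomial F,
      B.natDegree + D.natDegree < M₁.natDegree + M₂.natDegree →
      (∀ x y : F, (x,y) ∈ V ↔
        (evalN k A x + evalN k B y = 0 ∧ evalN k C x + evalN k D y = 0)) →
      (∀ g : MvPolynomial (Fin 2) F, g ∣ mvP k A B → g ∣ mvP k C D → g ∣ f₁ ∧ g ∣ f₂) →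
      A.degree + D.degree ≤ (Dd : WithBot ℕ) →
      C.degree + B.degree ≤ (Dd : WithBot ℕ) →
      (V.ncard ≤ 2 ^ Dd ∨
        ∃ g : MvPolynomial (Fin 2) F, g ∣ f₁ ∧ g ∣ f₂ ∧ MvPolynomial.constantCoeff g = 0)) :
    V.ncard ≤ 2 ^ Dd ∨
      ∃ g : MvPolynomial (Fin 2) F, g ∣ f₁ ∧ g ∣ f₂ ∧ MvPolynomial.constantCoeff g = 0 := by
  have hnat : M₂.natDegree ≤ M₁.natDegree := Polynomial.natDegree_le_natDegree hle
  set s : ℕ := M₁.natDegree - M₂.natDegree with hs_def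
  set c : F := M₁.leadingCoeff / M₂.leadingCoeff ^ (2^(s*k)) with hc_def
  have hlc₂ : M₂.leadingCoeff ≠ 0 := Polynomial.leadingCoeff_ne_zero.mpr hM₂
  have hlc₁ : M₁.leadingCoeff ≠ 0 := Polynomial.leadingCoeff_ne_zero.mpr hM₁
  set L₁' : Polynomial F := L₁ + tw k c s L₂ with hL₁'_def
  set M₁' : Polynomial F := M₁ + tw k c s M₂ with hM₁'_def
  -- degree facts
  have htw_coeff : (tw k c s M₂).coeff M₁.natDegree = M₁.leadingCoeff := by
    rw [coeff_tw, if_pos (by omega)]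
    have : M₁.natDegree - s = M₂.natDegree := by omega
    rw [this, Polynomial.coeff_natDegree, hc_def,
      div_mul_cancel₀ _ (pow_ne_zero _ hlc₂)]
  have htw_deg_le : (tw k c s M₂).degree ≤ (M₁.natDegree : WithBot ℕ) := by
    refine le_trans (degree_tw_le c s M₂) ?_
    rw [Polynomial.degree_eq_natDegree hM₂, ← Nat.cast_add, Nat.cast_le]
    omega
  have htw_deg : (tw k c s M₂).degree = (M₁.natDegree : WithBot ℕ) :=
    Polynomial.degree_eq_of_le_of_coeff_ne_zero htw_deg_le (by rw [htw_coeff]; exact hlc₁)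
  have htw_natDeg : (tw k c s M₂).natDegree = M₁.natDegree :=
    Polynomial.natDegree_eq_of_degree_eq_some htw_deg
  have hlc_tw : (tw k c s M₂).leadingCoeff = M₁.leadingCoeff := by
    rw [Polynomial.leadingCoeff, htw_natDeg, htw_coeff]
  have hM₁'_lt : M₁'.degree < M₁.degree := by
    have hsub : M₁' = M₁ - tw k c s M₂ := by
      rw [hM₁'_def, CharTwo.sub_eq_add]
    rw [hsub]
    exact Polynomial.degree_sub_lt
      (by rw [htw_deg, Polynomial.degree_eq_natDegree hM₁]) hM₁ hlc_tw.symm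
  -- new zero-set hypothesis
  have hEpos : (2:ℕ)^(s*k) ≠ 0 := by positivity
  have h1' : ∀ x y : F, (x,y) ∈ V ↔
      (evalN k L₁' x + evalN k M₁' y = 0 ∧ evalN k L₂ x + evalN k M₂ y = 0) := by
    intro x y
    rw [h1 x y]
    have hkey : evalN k L₁' x + evalN k M₁' y
        = (evalN k L₁ x + evalN k M₁ y) + c * (evalN k L₂ x + evalN k M₂ y) ^ (2^(s*k)) := by
      rw [hL₁'_def, hM₁'_def, evalN_add, evalN_add, evalN_tw, evalN_tw, add_pow_char_pow]
      ring
    constructor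
    · rintro ⟨hA, hB⟩
      refine ⟨?_, hB⟩
      rw [hkey, hA, hB, zero_add, zero_pow hEpos, mul_zero]
    · rintro ⟨hA, hB⟩
      rw [hkey, hB, zero_pow hEpos, mul_zero, add_zero] at hA
      exact ⟨hA, hB⟩
  -- new divisibility hypothesis
  have hmv : mvP k L₁' M₁' = mvP k L₁ M₁ + MvPolynomial.C c * (mvP k L₂ M₂) ^ (2^(s*k)) :=
    mvP_tw L₁ M₁ L₂ M₂ c s
  have h2' : ∀ g : MvPolynomial (Fin 2) F,
      g ∣ mvP k L₁' M₁' → g ∣ mvP k L₂ M₂ → g ∣ f₁ ∧ g ∣ f₂ := by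
    intro g hg1 hg2
    refine h2 g ?_ hg2
    have : mvP k L₁ M₁ = mvP k L₁' M₁' - MvPolynomial.C c * (mvP k L₂ M₂) ^ (2^(s*k)) := by
      rw [hmv]; ring
    rw [this]
    exact dvd_sub hg1 (Dvd.dvd.mul_left (dvd_pow hg2 hEpos) _)
  -- new degree hypotheses
  have hd1' : L₁'.degree + M₂.degree ≤ (Dd : WithBot ℕ) := by
    have hadd := Polynomial.degree_add_le L₁ (tw k c s L₂)
    rcases max_choice L₁.degree (tw k c s L₂).degree with hmax | hmax
    · rw [hmax] at hadd
      exact le_trans (add_le_add_left hadd _) hd1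
    · rw [hmax] at hadd
      have e1 : (tw k c s L₂).degree + M₂.degree ≤ (L₂.degree + s) + M₂.degree :=
        add_le_add_left (degree_tw_le c s L₂) _
      have e2 : (L₂.degree + (s:WithBot ℕ)) + M₂.degree = L₂.degree + M₁.degree := by
        rw [add_assoc]
        congr 1
        rw [Polynomial.degree_eq_natDegree hM₂, Polynomial.degree_eq_natDegree hM₁,
          ← Nat.cast_add, Nat.cast_inj]
        omega
      refine le_trans (add_le_add_left hadd _) (le_trans e1 ?_)
      rw [e2]
      exact hd2
  have hd2' : L₂.degree + M₁'.degree ≤ (Dd : WithBot ℕ) :=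
    le_trans (add_le_add_right (le_of_lt hM₁'_lt) _) hd2
  -- recurse or finish
  by_cases hM₁'0 : M₁' = 0
  · rw [hM₁'0] at h1' h2'
    exact endCase hm hk hgcd hcard f₁ f₂ V Dd L₁' L₂ M₂ h1' h2' hd1'
  · refine IH L₁' M₁' L₂ M₂ ?_ h1' h2' hd1' hd2'
    have : M₁'.natDegree < M₁.natDegree :=
      Polynomial.natDegree_lt_natDegree hM₁'0 hM₁'_lt
    omega

lemma main' {m : ℕ} (hm : 0 < m) (hk : 0 < k) (hgcd : Nat.gcd k m = 1)
    (hcard : Fintype.card F = 2^m)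
    (f₁ f₂ : MvPolynomial (Fin 2) F) (V : Set (F × F)) (Dd : ℕ) :
    ∀ (n : ℕ) (L₁ M₁ L₂ M₂ : Polynomial F),
    M₁.natDegree + M₂.natDegree ≤ n →
    (∀ x y : F, (x,y) ∈ V ↔
      (evalN k L₁ x + evalN k M₁ y = 0 ∧ evalN k L₂ x + evalN k M₂ y = 0)) →
    (∀ g : MvPolynomial (Fin 2) F, g ∣ mvP k L₁ M₁ → g ∣ mvP k L₂ M₂ → g ∣ f₁ ∧ g ∣ f₂) →
    L₁.degree + M₂.degree ≤ (Dd : WithBot ℕ) →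
    L₂.degree + M₁.degree ≤ (Dd : WithBot ℕ) →
    (V.ncard ≤ 2 ^ Dd ∨
      ∃ g : MvPolynomial (Fin 2) F, g ∣ f₁ ∧ g ∣ f₂ ∧ MvPolynomial.constantCoeff g = 0) := by
  intro n
  induction n using Nat.strong_induction_on with
  | _ n ih =>
  intro L₁ M₁ L₂ M₂ hn h1 h2 hd1 hd2
  by_cases hM₁ : M₁ = 0
  · subst hM₁
    exact endCase hm hk hgcd hcard f₁ f₂ V Dd L₁ L₂ M₂ h1 h2 hd1
  by_cases hM₂ : M₂ = 0
  · subst hM₂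
    refine endCase hm hk hgcd hcard f₁ f₂ V Dd L₂ L₁ M₁
      (fun x y => (h1 x y).trans ⟨fun ⟨a,b⟩ => ⟨b,a⟩, fun ⟨a,b⟩ => ⟨b,a⟩⟩)
      (fun g hg1 hg2 => h2 g hg2 hg1) hd2
  have hIH : ∀ A B C D : Polynomial F,
      B.natDegree + D.natDegree < M₁.natDegree + M₂.natDegree →
      (∀ x y : F, (x,y) ∈ V ↔
        (evalN k A x + evalN k B y = 0 ∧ evalN k C x + evalN k D y = 0)) →
      (∀ g : MvPolynomial (Fin 2) F, g ∣ mvP k A B → g ∣ mvP k C D → g ∣ f₁ ∧ g ∣ f₂) →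
      A.degree + D.degree ≤ (Dd : WithBot ℕ) →
      C.degree + B.degree ≤ (Dd : WithBot ℕ) →
      (V.ncard ≤ 2 ^ Dd ∨
        ∃ g : MvPolynomial (Fin 2) F, g ∣ f₁ ∧ g ∣ f₂ ∧ MvPolynomial.constantCoeff g = 0) := by
    intro A B C D hlt h1' h2' d1 d2
    exact ih (B.natDegree + D.natDegree) (by omega) A B C D le_rfl h1' h2' d1 d2
  rcases le_total M₂.degree M₁.degree with hle | hle
  · exact stepCase hm hk hgcd hcard f₁ f₂ V Dd L₁ M₁ L₂ M₂ hM₁ hM₂ hle h1 h2 hd1 hd2 hIH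
  · refine stepCase hm hk hgcd hcard f₁ f₂ V Dd L₂ M₂ L₁ M₁ hM₂ hM₁ hle
      (fun x y => (h1 x y).trans ⟨fun ⟨a,b⟩ => ⟨b,a⟩, fun ⟨a,b⟩ => ⟨b,a⟩⟩)
      (fun g hg1 hg2 => h2 g hg2 hg1) hd2 hd1 ?_
    intro A B C D hlt h1' h2' d1 d2
    exact hIH A B C D (by omega) h1' h2' d1 d2

end
set_option maxHeartbeats 1000000 in
/-- If two 2-variable linearized polynomials over `𝔽_{2^m}` of the form
`∑ᵢ (Cᵢ X^(2^(ik)) + Dᵢ Y^(2^(ik)))`, of degrees `2^(d₁k)` and `2^(d₂k)` with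
`gcd(k,m)=1`, have no common nonconstant factor over the algebraic closure, then they
have at most `2^(d₁+d₂)` common zeros in `𝔽_{2^m} × 𝔽_{2^m}`. -/
theorem stmt5 (m k d₁ d₂ : ℕ) (hm : 0 < m) (hk : 0 < k) (hgcd : Nat.gcd k m = 1)
    (C₁ D₁ C₂ D₂ : ℕ → GaloisField 2 m)
    (f₁ f₂ : MvPolynomial (Fin 2) (GaloisField 2 m))
    (hf₁ : f₁ = ∑ i ∈ Finset.range (d₁ + 1),
      (MvPolynomial.C (C₁ i) * MvPolynomial.X 0 ^ (2 ^ (i * k)) +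
       MvPolynomial.C (D₁ i) * MvPolynomial.X 1 ^ (2 ^ (i * k))))
    (hf₂ : f₂ = ∑ i ∈ Finset.range (d₂ + 1),
      (MvPolynomial.C (C₂ i) * MvPolynomial.X 0 ^ (2 ^ (i * k)) +
       MvPolynomial.C (D₂ i) * MvPolynomial.X 1 ^ (2 ^ (i * k))))
    (hd₁ : C₁ d₁ ≠ 0 ∨ D₁ d₁ ≠ 0) (hd₂ : C₂ d₂ ≠ 0 ∨ D₂ d₂ ≠ 0)
    (hcop : ∀ g : MvPolynomial (Fin 2) (AlgebraicClosure (GaloisField 2 m)),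
      g ∣ MvPolynomial.map (algebraMap (GaloisField 2 m) (AlgebraicClosure (GaloisField 2 m))) f₁ →
      g ∣ MvPolynomial.map (algebraMap (GaloisField 2 m) (AlgebraicClosure (GaloisField 2 m))) f₂ →
      IsUnit g) :
    {p : GaloisField 2 m × GaloisField 2 m |
      MvPolynomial.eval ![p.1, p.2] f₁ = 0 ∧ MvPolynomial.eval ![p.1, p.2] f₂ = 0}.ncard
      ≤ 2 ^ (d₁ + d₂) := by
  classical
  letI : Fintype (GaloisField 2 m) := Fintype.ofFinite _
  have hcard : Fintype.card (GaloisField 2 m) = 2 ^ m := by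
    rw [← Nat.card_eq_fintype_card]
    exact GaloisField.card 2 m hm.ne'
  -- the one-variable coefficient polynomials
  set P₁ : Polynomial (GaloisField 2 m) := ∑ i ∈ range (d₁+1), Polynomial.monomial i (C₁ i) with hP₁
  set Q₁ : Polynomial (GaloisField 2 m) := ∑ i ∈ range (d₁+1), Polynomial.monomial i (D₁ i) with hQ₁
  set P₂ : Polynomial (GaloisField 2 m) := ∑ i ∈ range (d₂+1), Polynomial.monomial i (C₂ i) with hP₂
  set Q₂ : Polynomial (GaloisField 2 m) := ∑ i ∈ range (d₂+1), Polynomial.monomial i (D₂ i) with hQ₂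
  have hdeg : ∀ (d : ℕ) (c : ℕ → GaloisField 2 m),
      (∑ i ∈ range (d+1), Polynomial.monomial i (c i)).degree ≤ (d : WithBot ℕ) := by
    intro d c
    refine le_trans (Polynomial.degree_sum_le _ _) ?_
    rw [Finset.sup_le_iff]
    intro i hi
    refine le_trans (Polynomial.degree_monomial_le _ _) ?_
    rw [Nat.cast_le]
    exact Nat.lt_succ_iff.mp (Finset.mem_range.mp hi)
  have hndeg : ∀ (d : ℕ) (c : ℕ → GaloisField 2 m),
      (∑ i ∈ range (d+1), Polynomial.monomial i (c i)).natDegree < d + 1 := by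
    intro d c
    have := hdeg d c
    exact Nat.lt_succ_of_le (Polynomial.natDegree_le_iff_degree_le.mpr this)
  have hcoeff : ∀ (d : ℕ) (c : ℕ → GaloisField 2 m) (i : ℕ), i < d + 1 →
      (∑ j ∈ range (d+1), Polynomial.monomial j (c j)).coeff i = c i := by
    intro d c i hi
    rw [Polynomial.finset_sum_coeff]
    rw [Finset.sum_eq_single i]
    · rw [Polynomial.coeff_monomial, if_pos rfl]
    · intro j _ hj
      rw [Polynomial.coeff_monomial, if_neg hj]
    · intro hni
      exact absurd (Finset.mem_range.mpr hi) hni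
  have hmv : ∀ (d : ℕ) (c e : ℕ → GaloisField 2 m),
      mvP k (∑ i ∈ range (d+1), Polynomial.monomial i (c i))
           (∑ i ∈ range (d+1), Polynomial.monomial i (e i))
      = ∑ i ∈ range (d+1),
        (MvPolynomial.C (c i) * MvPolynomial.X 0 ^ (2 ^ (i * k)) +
         MvPolynomial.C (e i) * MvPolynomial.X 1 ^ (2 ^ (i * k))) := by
    intro d c e
    unfold mvP
    rw [mvL_eq_range _ (hndeg d c), mvM_eq_range _ (hndeg d e), ← Finset.sum_add_distrib]
    refine Finset.sum_congr rfl fun i hi => ?_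
    rw [hcoeff d c i (Finset.mem_range.mp hi), hcoeff d e i (Finset.mem_range.mp hi)]
  have hf₁' : f₁ = mvP k P₁ Q₁ := by rw [hf₁, hP₁, hQ₁, hmv]
  have hf₂' : f₂ = mvP k P₂ Q₂ := by rw [hf₂, hP₂, hQ₂, hmv]
  set V : Set (GaloisField 2 m × GaloisField 2 m) := {p : GaloisField 2 m × GaloisField 2 m |
      MvPolynomial.eval ![p.1, p.2] f₁ = 0 ∧ MvPolynomial.eval ![p.1, p.2] f₂ = 0} with hV
  have h1 : ∀ x y : GaloisField 2 m, (x,y) ∈ V ↔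
      (evalN k P₁ x + evalN k Q₁ y = 0 ∧ evalN k P₂ x + evalN k Q₂ y = 0) := by
    intro x y
    rw [hV, Set.mem_setOf_eq]
    rw [hf₁', hf₂']
    constructor
    · rintro ⟨ha, hb⟩
      rw [← eval_mvP, ← eval_mvP]
      exact ⟨ha, hb⟩
    · rintro ⟨ha, hb⟩
      rw [eval_mvP, eval_mvP]
      exact ⟨ha, hb⟩
  have h2 : ∀ g : MvPolynomial (Fin 2) (GaloisField 2 m),
      g ∣ mvP k P₁ Q₁ → g ∣ mvP k P₂ Q₂ → g ∣ f₁ ∧ g ∣ f₂ := by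
    intro g hg1 hg2
    rw [hf₁', hf₂']
    exact ⟨hg1, hg2⟩
  have hdcast : ((d₁ + d₂ : ℕ) : WithBot ℕ) = (d₁ : WithBot ℕ) + (d₂ : WithBot ℕ) :=
    Nat.cast_add _ _
  have hd1 : P₁.degree + Q₂.degree ≤ ((d₁ + d₂ : ℕ) : WithBot ℕ) := by
    rw [hdcast]
    exact add_le_add (hdeg d₁ C₁) (hdeg d₂ D₂)
  have hd2 : P₂.degree + Q₁.degree ≤ ((d₁ + d₂ : ℕ) : WithBot ℕ) := by
    rw [hdcast, add_comm (d₁ : WithBot ℕ)]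
    exact add_le_add (hdeg d₂ C₂) (hdeg d₁ D₁)
  rcases main' hm hk hgcd hcard f₁ f₂ V (d₁ + d₂) (Q₁.natDegree + Q₂.natDegree)
      P₁ Q₁ P₂ Q₂ le_rfl h1 h2 hd1 hd2 with hle | ⟨g, hg1, hg2, hg0⟩
  · exact hle
  · exfalso
    set φ := algebraMap (GaloisField 2 m) (AlgebraicClosure (GaloisField 2 m)) with hφ
    have hu : IsUnit (MvPolynomial.map φ g) :=
      hcop _ (map_dvd _ hg1) (map_dvd _ hg2)
    obtain ⟨u, hu'⟩ := isUnit_iff_exists_inv.mp hu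
    have := congrArg MvPolynomial.constantCoeff hu'
    rw [map_mul, map_one, MvPolynomial.constantCoeff_map, hg0, map_zero, zero_mul] at this
    exact zero_ne_one this
end

section
/- Let $m$ be even and $k$ a positive integer with $\gcd(k,m)=1$ and $k < m/2$. Then for every nonzero $\alpha \in \mathbb{F}_{2^m}$, the number of affine points $(x,t) \in \mathbb{F}_{2^m}^2$ on the curve $X^3 = \alpha(T^{2^k} + T)$ is at least $2^{m/2}(2^{m/2} - 2(2^k - 1))$; in particular it is positive. -/
open Finset
set_option linter.unusedSectionVars false
set_option linter.unusedVariables false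
set_option maxHeartbeats 1000000

namespace Stmt6Aux

variable {F : Type} [Field F] [Fintype F] [DecidableEq F] [CharP F 2]
variable {m : ℕ}

/-- trace-like map -/
def T (m : ℕ) (x : F) : F := ∑ i ∈ Finset.range m, x ^ (2 ^ i)

variable {m : ℕ}

theorem pow_card (hF : Fintype.card F = 2 ^ m) (x : F) : x ^ (2 ^ m) = x := by
  rw [← hF]; exact FiniteField.pow_card x

theorem T_add (x y : F) : T m (x + y) = T m x + T m y := by
  rw [T, T, T, ← Finset.sum_add_distrib]
  exact Finset.sum_congr rfl fun i _ => add_pow_char_pow ..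

theorem T_sq (hF : Fintype.card F = 2 ^ m) (x : F) : T m x ^ 2 = T m x := by
  rw [T, sum_pow_char]
  have h1 : ∀ i ∈ range m, (x ^ 2 ^ i) ^ 2 = x ^ 2 ^ (i + 1) := by
    intro i _; rw [← pow_mul, pow_succ]
  rw [Finset.sum_congr rfl h1]
  have h2 := Finset.sum_range_succ' (fun i => x ^ 2 ^ i) m
  have h3 := Finset.sum_range_succ (fun i => x ^ 2 ^ i) m
  simp only [pow_zero, pow_one] at h2 h3
  rw [pow_card hF] at h3
  have := h2.symm.trans h3
  exact add_right_cancel this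

theorem T_frob (hF : Fintype.card F = 2 ^ m) (x : F) : T m (x ^ 2) = T m x := by
  have h : T m (x ^ 2) = (T m x) ^ 2 := by
    rw [T, T, sum_pow_char]
    exact Finset.sum_congr rfl fun i _ => by rw [← pow_mul, ← pow_mul, mul_comm]
  rw [h, T_sq hF]

theorem T_zero_or_one (hF : Fintype.card F = 2 ^ m) (x : F) : T m x = 0 ∨ T m x = 1 := by
  have h := T_sq hF x
  have h2 : T m x * (T m x - 1) = 0 := by linear_combination h
  rcases mul_eq_zero.mp h2 with h3 | h3
  · exact Or.inl h3
  · exact Or.inr (sub_eq_zero.mp h3)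

theorem T_zero : T m (0 : F) = 0 := by
  simp only [T]
  exact Finset.sum_eq_zero fun i _ => zero_pow (pow_pos two_pos i).ne'

theorem T_pow_pow (hF : Fintype.card F = 2 ^ m) (j : ℕ) (x : F) : T m (x ^ 2 ^ j) = T m x := by
  induction j with
  | zero => simp
  | succ n ih =>
    have : x ^ 2 ^ (n + 1) = (x ^ 2 ^ n) ^ 2 := by rw [← pow_mul, pow_succ]
    rw [this, T_frob hF, ih]

theorem exists_T_ne_zero (hF : Fintype.card F = 2 ^ m) (hm : 0 < m) : ∃ e : F, T m e = 1 := by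
  by_contra hcon
  push_neg at hcon
  have hall : ∀ x : F, T m x = 0 := fun x =>
    (T_zero_or_one hF x).resolve_right (hcon x)
  set p : Polynomial F := ∑ i ∈ range m, Polynomial.X ^ (2 ^ i) with hp
  have heval : ∀ x : F, p.eval x = 0 := by
    intro x
    have : p.eval x = T m x := by
      simp [hp, T, Polynomial.eval_finset_sum]
    rw [this, hall]
  have hdeg : p.natDegree ≤ 2 ^ (m - 1) := by
    apply Polynomial.natDegree_sum_le_of_forall_le
    intro i hi
    rw [Polynomial.natDegree_X_pow]
    have := mem_range.mp hi
    exact Nat.pow_le_pow_right (by norm_num) (by omega)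
  have hzero : p = 0 := by
    apply Polynomial.eq_zero_of_natDegree_lt_card_of_eval_eq_zero p Function.injective_id
      (fun x => heval x)
    rw [hF]
    calc p.natDegree ≤ 2 ^ (m - 1) := hdeg
      _ < 2 ^ m := Nat.pow_lt_pow_right one_lt_two (by omega)
  have hc : p.coeff (2 ^ (m - 1)) = 1 := by
    rw [hp, Polynomial.finset_sum_coeff]
    have : ∀ i ∈ range m, (Polynomial.X ^ (2 ^ i) : Polynomial F).coeff (2 ^ (m-1)) =
        if i = m - 1 then 1 else 0 := by
      intro i hi
      rw [Polynomial.coeff_X_pow]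
      congr 1
      simp only [eq_iff_iff]
      constructor
      · intro h; exact Nat.pow_right_injective (le_refl 2) h.symm
      · intro h; rw [h]
    rw [Finset.sum_congr rfl this, Finset.sum_ite_eq' (range m) (m-1) (fun _ => 1)]
    simp [Finset.mem_range]
    omega
  rw [hzero] at hc
  simp at hc


/-- the additive character with values in ℤ -/
def χ (m : ℕ) (x : F) : ℤ := if T m x = 0 then 1 else -1

theorem χ_zero : χ m (0 : F) = 1 := by simp [χ, T_zero]

theorem χ_add (hF : Fintype.card F = 2 ^ m) (x y : F) :
    χ m (x + y) = χ m x * χ m y := by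
  have h2 : (1 : F) + 1 = 0 := CharTwo.add_self_eq_zero 1
  have h10 : (1 : F) ≠ 0 := one_ne_zero
  rcases T_zero_or_one hF x with hx | hx <;> rcases T_zero_or_one hF y with hy | hy <;>
    simp [χ, T_add, hx, hy, h2, h10]

theorem χ_pow_pow (hF : Fintype.card F = 2 ^ m) (j : ℕ) (x : F) :
    χ m (x ^ 2 ^ j) = χ m x := by
  simp [χ, T_pow_pow hF]

theorem χ_sum (hF : Fintype.card F = 2 ^ m) (hm : 0 < m) :
    ∑ x : F, χ m x = 0 := by
  obtain ⟨e, he⟩ := exists_T_ne_zero hF hm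
  have he0 : e ≠ 0 := by intro h; rw [h, T_zero] at he; exact one_ne_zero he.symm
  apply Finset.sum_involution (fun a _ => a + e)
  · intro a _
    rw [χ_add hF]
    rcases T_zero_or_one hF a with h | h <;> simp [χ, h, he]
  · intro a _ _
    simp [he0]
  · intro a _; exact mem_univ _
  · intro a _
    rw [add_assoc, CharTwo.add_self_eq_zero, add_zero]

theorem χ_sum_mul (hF : Fintype.card F = 2 ^ m) (hm : 0 < m) (c : F) :
    ∑ x : F, χ m (c * x) = if c = 0 then (2 ^ m : ℤ) else 0 := by
  by_cases hc : c = 0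
  · simp [hc, χ_zero, hF]
  · rw [if_neg hc, ← χ_sum hF hm]
    exact Equiv.sum_comp (Equiv.mulLeft₀ c hc) (χ m)


theorem frob_pow_inj (j : ℕ) {x y : F} (h : x ^ 2 ^ j = y ^ 2 ^ j) : x = y := by
  have h2 : (x + y) ^ 2 ^ j = 0 := by
    rw [add_pow_char_pow, h, CharTwo.add_self_eq_zero]
  have := pow_eq_zero_iff (pow_pos two_pos j).ne' |>.mp h2
  calc x = x + (x + y) := by rw [this, add_zero]
    _ = y := by rw [← add_assoc, CharTwo.add_self_eq_zero, zero_add]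

private theorem fix_add {d : F} {a b : ℕ} (ha : d ^ 2 ^ a = d) (hb : d ^ 2 ^ b = d) :
    d ^ 2 ^ (a + b) = d := by
  rw [pow_add, pow_mul, ha, hb]

private theorem fix_sub {d : F} {a b : ℕ} (hab : d ^ 2 ^ (a + b) = d) (hb : d ^ 2 ^ b = d) :
    d ^ 2 ^ a = d := by
  apply frob_pow_inj b
  rw [← pow_mul, ← pow_add, hab, hb]

private theorem fix_mul {d : F} {a : ℕ} (t : ℕ) (ha : d ^ 2 ^ a = d) :
    d ^ 2 ^ (a * t) = d := by
  induction t with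
  | zero => simp
  | succ n ih => rw [mul_add, mul_one]; exact fix_add ih ha

theorem fix_gcd {d : F} : ∀ a b : ℕ, d ^ 2 ^ a = d → d ^ 2 ^ b = d →
    d ^ 2 ^ (Nat.gcd a b) = d := by
  intro a
  induction a using Nat.strong_induction_on with
  | _ a ih =>
    intro b ha hb
    rcases Nat.eq_zero_or_pos a with h0 | hpos
    · subst h0; rwa [Nat.gcd_zero_left]
    · rw [Nat.gcd_rec]
      apply ih (b % a) (Nat.mod_lt _ hpos) a _ ha
      -- d ^ 2 ^ (b % a) = d
      have hdiv : b = a * (b / a) + b % a := by rw [Nat.div_add_mod]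
      have hmul := fix_mul (b / a) ha
      apply fix_sub (a := b % a) (b := a * (b / a))
      · rw [add_comm, ← hdiv]; exact hb
      · exact hmul

theorem fixed_of_pow (hF : Fintype.card F = 2 ^ m) {j : ℕ} (hgcd : Nat.gcd j m = 1)
    {d : F} (hd : d ^ 2 ^ j = d) : d = 0 ∨ d = 1 := by
  have hm : d ^ 2 ^ m = d := by rw [← hF]; exact FiniteField.pow_card d
  have h1 : d ^ 2 ^ 1 = d := by rw [← hgcd]; exact fix_gcd j m hd hm
  have h2 : d * (d - 1) = 0 := by
    have : d ^ 2 = d := by simpa using h1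
    linear_combination this
  rcases mul_eq_zero.mp h2 with h | h
  · exact Or.inl h
  · exact Or.inr (sub_eq_zero.mp h)


theorem three_dvd (hm2 : Even m) : 3 ∣ 2 ^ m - 1 := by
  obtain ⟨r, hr⟩ := hm2
  have h : 2 ^ m = 4 ^ r := by rw [hr, ← two_mul, pow_mul]; norm_num
  rw [h]
  have := Nat.sub_dvd_pow_sub_pow 4 1 r
  simpa using this

theorem exists_omega (hF : Fintype.card F = 2 ^ m) (hm2 : Even m) (hm : 0 < m) :
    ∃ ω : F, ω ^ 3 = 1 ∧ ω ≠ 1 := by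
  have hcard : Fintype.card Fˣ = 2 ^ m - 1 := by rw [Fintype.card_units, hF]
  have h3 : (3 : ℕ) ∣ Fintype.card Fˣ := by rw [hcard]; exact three_dvd hm2
  haveI : Fact (Nat.Prime 3) := ⟨by norm_num⟩
  obtain ⟨ζ, hζ⟩ := exists_prime_orderOf_dvd_card 3 h3
  refine ⟨(ζ : F), ?_, ?_⟩
  · have h1 : ζ ^ 3 = 1 := by rw [← hζ]; exact pow_orderOf_eq_one ζ
    rw [← Units.val_pow_eq_pow_val, h1, Units.val_one]
  · intro h
    have : ζ = 1 := Units.ext h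
    rw [this, orderOf_one] at hζ
    norm_num at hζ

theorem quad_roots {ω z : F} (hω3 : ω ^ 3 = 1) (hω1 : ω ≠ 1) (hz3 : z ^ 3 = 1) (hz1 : z ≠ 1) :
    z = ω ∨ z = ω ^ 2 := by
  have hωq : ω ^ 2 + ω + 1 = 0 := by
    have h : (ω - 1) * (ω ^ 2 + ω + 1) = 0 := by linear_combination hω3
    rcases mul_eq_zero.mp h with h' | h'
    · exact absurd (sub_eq_zero.mp h') hω1
    · exact h'
  have hzq : z ^ 2 + z + 1 = 0 := by
    have h : (z - 1) * (z ^ 2 + z + 1) = 0 := by linear_combination hz3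
    rcases mul_eq_zero.mp h with h' | h'
    · exact absurd (sub_eq_zero.mp h') hz1
    · exact h'
  have h2z : z + z = 0 := CharTwo.add_self_eq_zero z
  have hfact : (z + ω) * (z + ω ^ 2) = 0 := by
    linear_combination hzq + z * hωq + hω3 - h2z
  rcases mul_eq_zero.mp hfact with h | h
  · left; calc z = z + 0 := by rw [add_zero]
      _ = z + (ω + ω) := by rw [CharTwo.add_self_eq_zero]
      _ = (z + ω) + ω := by ring
      _ = ω := by rw [h, zero_add]
  · right; calc z = z + 0 := by rw [add_zero]
      _ = z + (ω ^ 2 + ω ^ 2) := by rw [CharTwo.add_self_eq_zero]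
      _ = (z + ω ^ 2) + ω ^ 2 := by ring
      _ = ω ^ 2 := by rw [h, zero_add]

theorem card_cube_roots_one (hF : Fintype.card F = 2 ^ m) (hm2 : Even m) (hm : 0 < m) :
    (univ.filter fun x : F => x ^ 3 = 1).card = 3 := by
  obtain ⟨ω, hω3, hω1⟩ := exists_omega hF hm2 hm
  have hω21 : ω ^ 2 ≠ 1 := by
    intro h
    have h3 := hω3
    rw [pow_succ, h, one_mul] at h3
    exact hω1 h3
  have hωω2 : ω ≠ ω ^ 2 := by
    intro h
    have h3 := hω3
    rw [pow_succ, ← h] at h3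
    have : ω ^ 2 = 1 := by rw [← h3]; ring
    exact hω21 this
  have hset : (univ.filter fun x : F => x ^ 3 = 1) = {1, ω, ω ^ 2} := by
    ext z
    simp only [mem_filter, mem_univ, true_and, mem_insert, mem_singleton]
    constructor
    · intro hz
      by_cases hz1 : z = 1
      · exact Or.inl hz1
      · rcases quad_roots hω3 hω1 hz hz1 with h | h
        · exact Or.inr (Or.inl h)
        · exact Or.inr (Or.inr h)
    · rintro (rfl | rfl | rfl)
      · exact one_pow 3
      · exact hω3
      · rw [← pow_mul]; rw [show 2 * 3 = 3 * 2 by ring, pow_mul, hω3, one_pow]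
  rw [hset]
  rw [Finset.card_insert_of_notMem (by simp [Ne.symm hω1, Ne.symm hω21]),
    Finset.card_insert_of_notMem (by simp [hωω2]), Finset.card_singleton]

theorem card_cube_eq (hF : Fintype.card F = 2 ^ m) (hm2 : Even m) (hm : 0 < m)
    {y : F} (hy : y ≠ 0) :
    (univ.filter fun x : F => x ^ 3 = y ^ 3).card = 3 := by
  have hbij : (univ.filter fun x : F => x ^ 3 = y ^ 3).card =
      (univ.filter fun x : F => x ^ 3 = 1).card := by
    apply Finset.card_bij' (fun z _ => z * y⁻¹) (fun x _ => x * y)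
    · intro z hz
      simp only [mem_filter, mem_univ, true_and] at hz ⊢
      rw [mul_pow, hz, inv_pow, mul_inv_cancel₀ (pow_ne_zero 3 hy)]
    · intro x hx
      simp only [mem_filter, mem_univ, true_and] at hx ⊢
      rw [mul_pow, hx, one_mul]
    · intro z _; field_simp
    · intro x _; field_simp
  rw [hbij, card_cube_roots_one hF hm2 hm]

theorem card_pairs (hF : Fintype.card F = 2 ^ m) (hm2 : Even m) (hm : 0 < m) :
    (univ.filter fun p : F × F => p.1 ^ 3 = p.2 ^ 3).card = 3 * 2 ^ m - 2 := by
  rw [Finset.card_filter]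
  rw [Fintype.sum_prod_type]
  rw [Finset.sum_comm]
  have hinner : ∀ y : F, (∑ x : F, if x ^ 3 = y ^ 3 then 1 else 0) =
      if y = 0 then 1 else 3 := by
    intro y
    rw [← Finset.card_filter]
    by_cases hy : y = 0
    · subst hy
      rw [if_pos rfl]
      have : (univ.filter fun x : F => x ^ 3 = 0 ^ 3) = {0} := by
        ext x
        simp [pow_eq_zero_iff (n := 3) (by norm_num)]
      rw [this, Finset.card_singleton]
    · rw [if_neg hy]; exact card_cube_eq hF hm2 hm hy
  rw [Finset.sum_congr rfl fun y _ => hinner y]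
  rw [← Finset.sum_erase_add _ _ (mem_univ (0 : F))]
  rw [if_pos rfl]
  have hconst : ∀ y ∈ univ.erase (0 : F), (if y = 0 then 1 else 3) = 3 := by
    intro y hy
    rw [if_neg (Finset.mem_erase.mp hy).1]
  rw [Finset.sum_congr rfl hconst, Finset.sum_const, Finset.card_erase_of_mem (mem_univ _),
    Finset.card_univ, hF, smul_eq_mul]
  have : (1:ℕ) ≤ 2 ^ m := Nat.one_le_two_pow
  omega


def S (m : ℕ) (γ : F) : ℤ := ∑ x : F, χ m (γ * x ^ 3)

theorem S_zero (hF : Fintype.card F = 2 ^ m) : S m (0 : F) = 2 ^ m := by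
  simp [S, χ_zero, Finset.card_univ, hF]

theorem char_two_eq_iff (a b : F) : a + b = 0 ↔ a = b := by
  rw [CharTwo.add_eq_iff_eq_add, zero_add]

theorem sum_S (hF : Fintype.card F = 2 ^ m) (hm : 0 < m) :
    ∑ γ : F, S m γ = 2 ^ m := by
  calc ∑ γ : F, S m γ = ∑ γ : F, ∑ x : F, χ m (γ * x ^ 3) := rfl
    _ = ∑ x : F, ∑ γ : F, χ m (γ * x ^ 3) := Finset.sum_comm
    _ = ∑ x : F, ∑ γ : F, χ m (x ^ 3 * γ) := by
        exact Finset.sum_congr rfl fun x _ => Finset.sum_congr rfl fun γ _ => by rw [mul_comm]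
    _ = ∑ x : F, if x ^ 3 = 0 then (2 ^ m : ℤ) else 0 := by
        exact Finset.sum_congr rfl fun x _ => χ_sum_mul hF hm _
    _ = ∑ x : F, if x = 0 then (2 ^ m : ℤ) else 0 := by
        simp only [pow_eq_zero_iff (by norm_num : (3:ℕ) ≠ 0)]
    _ = 2 ^ m := by
        rw [Finset.sum_ite_eq' univ (0:F) fun _ => (2 ^ m : ℤ)]
        simp

theorem sum_S_sq (hF : Fintype.card F = 2 ^ m) (hm2 : Even m) (hm : 0 < m) :
    ∑ γ : F, (S m γ) ^ 2 = 2 ^ m * (3 * 2 ^ m - 2) := by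
  have hS2 : ∀ γ : F, S m γ ^ 2 = ∑ x : F, ∑ y : F, χ m (γ * (x ^ 3 + y ^ 3)) := by
    intro γ
    rw [sq, S, Finset.sum_mul_sum]
    exact Finset.sum_congr rfl fun x _ => Finset.sum_congr rfl fun y _ =>
      (by rw [mul_add, χ_add hF])
  have hcount : (∑ x : F, ∑ y : F, if x ^ 3 = y ^ 3 then (1:ℤ) else 0) =
      ((3 * 2 ^ m - 2 : ℕ) : ℤ) := by
    rw [← card_pairs hF hm2 hm, Finset.card_filter]
    push_cast
    rw [Fintype.sum_prod_type]
  calc ∑ γ : F, S m γ ^ 2 = ∑ γ : F, ∑ x : F, ∑ y : F, χ m (γ * (x ^ 3 + y ^ 3)) :=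
        Finset.sum_congr rfl fun γ _ => hS2 γ
    _ = ∑ x : F, ∑ γ : F, ∑ y : F, χ m (γ * (x ^ 3 + y ^ 3)) := Finset.sum_comm
    _ = ∑ x : F, ∑ y : F, ∑ γ : F, χ m (γ * (x ^ 3 + y ^ 3)) :=
        Finset.sum_congr rfl fun x _ => Finset.sum_comm
    _ = ∑ x : F, ∑ y : F, ∑ γ : F, χ m ((x ^ 3 + y ^ 3) * γ) := by
        exact Finset.sum_congr rfl fun x _ => Finset.sum_congr rfl fun y _ =>
          Finset.sum_congr rfl fun γ _ => (by rw [mul_comm])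
    _ = ∑ x : F, ∑ y : F, if x ^ 3 + y ^ 3 = 0 then (2 ^ m : ℤ) else 0 := by
        exact Finset.sum_congr rfl fun x _ => Finset.sum_congr rfl fun y _ =>
          χ_sum_mul hF hm _
    _ = ∑ x : F, ∑ y : F, if x ^ 3 = y ^ 3 then (2 ^ m : ℤ) else 0 := by
        simp only [char_two_eq_iff]
    _ = 2 ^ m * ∑ x : F, ∑ y : F, (if x ^ 3 = y ^ 3 then (1:ℤ) else 0) := by
        rw [Finset.mul_sum]
        exact Finset.sum_congr rfl fun x _ => by
          rw [Finset.mul_sum]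
          exact Finset.sum_congr rfl fun y _ => by
            rw [mul_ite, mul_one, mul_zero]
    _ = 2 ^ m * (3 * 2 ^ m - 2) := by
        rw [hcount]
        have h1 : (1:ℕ) ≤ 2 ^ m := Nat.one_le_two_pow
        have : ((3 * 2 ^ m - 2 : ℕ) : ℤ) = 3 * 2 ^ m - 2 := by
          push_cast [Nat.cast_sub (by omega : 2 ≤ 3 * 2 ^ m)]
          ring
        rw [this]

theorem S_mul_cube (γ : F) {c : F} (hc : c ≠ 0) : S m (γ * c ^ 3) = S m γ := by
  rw [S, S]
  calc ∑ x : F, χ m (γ * c ^ 3 * x ^ 3) = ∑ x : F, χ m (γ * (c * x) ^ 3) := by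
        exact Finset.sum_congr rfl fun x _ => by rw [mul_pow, mul_assoc]
    _ = ∑ y : F, χ m (γ * y ^ 3) :=
        Fintype.sum_bijective _ (mulLeft_bijective₀ c hc) _ _ (fun x => rfl)

theorem S_sq (hF : Fintype.card F = 2 ^ m) (γ : F) : S m (γ ^ 2) = S m γ := by
  have hbij : Function.Bijective (fun x : F => x ^ 2) :=
    Finite.injective_iff_bijective.mp fun x y h => frob_pow_inj 1 (by simpa using h)
  have h1 : ∑ y : F, χ m (γ ^ 2 * (y ^ 2) ^ 3) = ∑ x : F, χ m (γ ^ 2 * x ^ 3) :=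
    Fintype.sum_bijective _ hbij _ _ (fun y => rfl)
  have h2 : ∀ y : F, χ m (γ ^ 2 * (y ^ 2) ^ 3) = χ m (γ * y ^ 3) := by
    intro y
    have h : γ ^ 2 * (y ^ 2) ^ 3 = (γ * y ^ 3) ^ 2 ^ 1 := by ring
    rw [h, χ_pow_pow hF]
  rw [S, S, ← h1, Finset.sum_congr rfl fun y _ => h2 y]


/-- the set of nonzero cubes -/
def CubeSet (F : Type) [Field F] [Fintype F] [DecidableEq F] : Finset F :=
  univ.filter fun z : F => ∃ c : F, c ≠ 0 ∧ c ^ 3 = z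

theorem card_cubes (hF : Fintype.card F = 2 ^ m) (hm2 : Even m) (hm : 0 < m) :
    3 * (CubeSet F).card = 2 ^ m - 1 := by
  classical
  set s : Finset F := univ.filter fun c : F => c ≠ 0 with hs
  have hscard : s.card = 2 ^ m - 1 := by
    rw [hs, Finset.filter_ne' univ 0, Finset.card_erase_of_mem (mem_univ _),
      Finset.card_univ, hF]
  have himg : s.image (fun c : F => c ^ 3) = CubeSet F := by
    ext z
    simp only [Finset.mem_image, hs, mem_filter, mem_univ, true_and, CubeSet]
  have hfib : ∀ b ∈ s.image (fun c : F => c ^ 3),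
      (s.filter fun c : F => c ^ 3 = b).card = 3 := by
    intro b hb
    obtain ⟨c₀, hc₀, rfl⟩ := Finset.mem_image.mp hb
    have hc₀' : c₀ ≠ 0 := by simpa [hs] using hc₀
    have heq : s.filter (fun c : F => c ^ 3 = c₀ ^ 3) =
        univ.filter fun c : F => c ^ 3 = c₀ ^ 3 := by
      ext c
      simp only [hs, Finset.filter_filter, mem_filter, mem_univ, true_and]
      constructor
      · rintro ⟨_, h⟩; exact h
      · intro h
        refine ⟨?_, h⟩
        intro hc0
        rw [hc0] at h
        exact pow_ne_zero 3 hc₀' (by simpa using h.symm)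
    rw [heq, card_cube_eq hF hm2 hm hc₀']
  have := Finset.card_eq_sum_card_image (fun c : F => c ^ 3) s
  rw [Finset.sum_congr rfl hfib, Finset.sum_const, smul_eq_mul, himg, hscard] at this
  omega

theorem cube_iff (hF : Fintype.card F = 2 ^ m) (hm2 : Even m) (hm : 0 < m)
    {n : ℕ} (hn : 2 ^ m - 1 = 3 * n) (z : F) :
    (∃ c : F, c ≠ 0 ∧ c ^ 3 = z) ↔ z ^ n = 1 := by
  have hq4 : 4 ≤ 2 ^ m := by
    obtain ⟨r, hr⟩ := hm2
    have hr1 : 1 ≤ r := by omega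
    calc (4:ℕ) = 2 ^ 2 := by norm_num
      _ ≤ 2 ^ m := Nat.pow_le_pow_right (by norm_num) (by omega)
  have hn1 : 1 ≤ n := by omega
  have hforward : ∀ w : F, (∃ c : F, c ≠ 0 ∧ c ^ 3 = w) → w ^ n = 1 := by
    rintro w ⟨c, hc, rfl⟩
    rw [← pow_mul, ← hn, ← hF]
    exact FiniteField.pow_card_sub_one_eq_one c hc
  constructor
  · exact hforward z
  · intro hz
    -- roots set
    set Roots : Finset F := univ.filter fun w : F => w ^ n = 1 with hR
    have hRcard : Roots.card ≤ n := by
      have hsub : Roots.val ⊆ (Polynomial.X ^ n - Polynomial.C (1:F)).roots := by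
        intro w hw
        rw [Polynomial.mem_roots (Polynomial.X_pow_sub_C_ne_zero (by omega) (1:F))]
        have hw' : w ^ n = 1 := by
          have := Finset.mem_filter.mp (by exact_mod_cast hw)
          exact this.2
        simp [Polynomial.IsRoot, hw']
      have := Polynomial.card_le_degree_of_subset_roots hsub
      rwa [Polynomial.natDegree_X_pow_sub_C] at this
    have hCsub : CubeSet F ⊆ Roots := by
      intro w hw
      rw [hR, Finset.mem_filter]
      refine ⟨mem_univ _, ?_⟩
      exact hforward w (by simpa [CubeSet] using hw)
    have hCcard : (CubeSet F).card = n := by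
      have := card_cubes hF hm2 hm
      omega
    have : CubeSet F = Roots := Finset.eq_of_subset_of_card_le hCsub (by omega)
    have hzR : z ∈ Roots := by rw [hR, Finset.mem_filter]; exact ⟨mem_univ _, hz⟩
    rw [← this] at hzR
    simpa [CubeSet] using hzR

theorem S_noncube_const (hF : Fintype.card F = 2 ^ m) (hm2 : Even m) (hm : 0 < m)
    {n : ℕ} (hn : 2 ^ m - 1 = 3 * n)
    {u v : F} (hu0 : u ≠ 0) (hun : u ^ n ≠ 1) (hv0 : v ≠ 0) (hvn : v ^ n ≠ 1) :
    S m u = S m v := by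
  have hpow : ∀ w : F, w ≠ 0 → (w ^ n) ^ 3 = 1 := by
    intro w hw
    rw [← pow_mul, mul_comm, ← hn, ← hF]
    exact FiniteField.pow_card_sub_one_eq_one w hw
  rcases quad_roots (hpow u hu0) hun (hpow v hv0) hvn with h | h
  · -- v^n = u^n, so v * u⁻¹ is a cube
    have hw0 : v * u⁻¹ ≠ 0 := mul_ne_zero hv0 (inv_ne_zero hu0)
    have hwn : (v * u⁻¹) ^ n = 1 := by
      rw [mul_pow, inv_pow, h, mul_inv_cancel₀ (pow_ne_zero n hu0)]
    obtain ⟨c, hc, hcw⟩ := (cube_iff hF hm2 hm hn (v * u⁻¹)).mpr hwn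
    have hv : v = u * c ^ 3 := by
      rw [hcw, mul_comm v u⁻¹, ← mul_assoc, mul_inv_cancel₀ hu0, one_mul]
    rw [hv, S_mul_cube u hc]
  · -- v^n = (u^n)^2
    have hu2 : (u : F) ^ 2 ≠ 0 := pow_ne_zero 2 hu0
    have hw0 : v * (u ^ 2)⁻¹ ≠ 0 := mul_ne_zero hv0 (inv_ne_zero hu2)
    have hwn : (v * (u ^ 2)⁻¹) ^ n = 1 := by
      rw [mul_pow, inv_pow, pow_right_comm, h, mul_inv_cancel₀]
      exact pow_ne_zero 2 (pow_ne_zero n hu0)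
    obtain ⟨c, hc, hcw⟩ := (cube_iff hF hm2 hm hn (v * (u ^ 2)⁻¹)).mpr hwn
    have hv : v = u ^ 2 * c ^ 3 := by
      rw [hcw, mul_comm v (u ^ 2)⁻¹, ← mul_assoc, mul_inv_cancel₀ hu2, one_mul]
    rw [hv, S_mul_cube (u ^ 2) hc, S_sq hF]


theorem S_ge_neg (hF : Fintype.card F = 2 ^ m) (hm2 : Even m) (hm : 0 < m)
    {β : F} (hβ : β ≠ 0) : -(2 * 2 ^ (m / 2)) ≤ S m β := by
  classical
  obtain ⟨n, hn⟩ := three_dvd (m := m) hm2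
  have hq4 : 4 ≤ 2 ^ m := by
    obtain ⟨r, hr⟩ := hm2
    calc (4:ℕ) = 2 ^ 2 := by norm_num
      _ ≤ 2 ^ m := Nat.pow_le_pow_right (by norm_num) (by omega)
  have hn1 : 1 ≤ n := by omega
  set s : ℤ := 2 ^ (m / 2) with hs
  have hs_pos : 0 < s := by positivity
  have hq_s : (2 ^ m : ℤ) = s ^ 2 := by
    rw [hs, ← pow_mul]
    congr 1
    obtain ⟨r, hr⟩ := hm2; omega
  set NZ : Finset F := univ.erase 0 with hNZ
  have hNZcard : NZ.card = 2 ^ m - 1 := by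
    rw [hNZ, Finset.card_erase_of_mem (mem_univ _), Finset.card_univ, hF]
  have hCsub : CubeSet F ⊆ NZ := by
    intro z hz
    simp only [CubeSet, mem_filter] at hz
    obtain ⟨-, c, hc, rfl⟩ := hz
    exact Finset.mem_erase.mpr ⟨pow_ne_zero 3 hc, mem_univ _⟩
  have hCcard : (CubeSet F).card = n := by have := card_cubes hF hm2 hm; omega
  have hNCcard : (NZ \ CubeSet F).card = 2 * n := by
    rw [Finset.card_sdiff_of_subset hCsub]; omega
  set A : ℤ := S m (1 : F) with hA
  have hcubeval : ∀ z ∈ CubeSet F, S m z = A := by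
    intro z hz
    simp only [CubeSet, mem_filter] at hz
    obtain ⟨-, c, hc, rfl⟩ := hz
    rw [hA]
    have h := S_mul_cube (m := m) (1 : F) hc
    rwa [one_mul] at h
  have hNCne : (NZ \ CubeSet F).Nonempty := by
    rw [← Finset.card_pos, hNCcard]; omega
  obtain ⟨g, hg⟩ := hNCne
  set B : ℤ := S m g with hB
  have hnc_char : ∀ z, z ∈ NZ \ CubeSet F → z ≠ 0 ∧ z ^ n ≠ 1 := by
    intro z hz
    rw [Finset.mem_sdiff] at hz
    obtain ⟨hz1, hz2⟩ := hz
    refine ⟨(Finset.mem_erase.mp hz1).1, ?_⟩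
    intro hzn
    exact hz2 (by
      simp only [CubeSet, mem_filter]
      exact ⟨mem_univ _, (cube_iff hF hm2 hm hn z).mpr hzn⟩)
  have hncval : ∀ z ∈ NZ \ CubeSet F, S m z = B := by
    intro z hz
    obtain ⟨hz0, hzn⟩ := hnc_char z hz
    obtain ⟨hg0, hgn⟩ := hnc_char g hg
    exact S_noncube_const hF hm2 hm hn hz0 hzn hg0 hgn
  -- first moment
  have hsum0 : ∑ γ ∈ NZ, S m γ = 0 := by
    have h1 : ∑ γ ∈ NZ, S m γ + S m (0 : F) = ∑ γ : F, S m γ :=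
      Finset.sum_erase_add (univ : Finset F) (S m) (mem_univ (0 : F))
    rw [sum_S hF hm, S_zero hF] at h1
    linarith
  have hsplit := Finset.sum_sdiff (f := S m) hCsub
  have hsumC : ∑ γ ∈ CubeSet F, S m γ = (n : ℤ) * A :=
    by rw [Finset.sum_congr rfl hcubeval, Finset.sum_const, hCcard, nsmul_eq_mul]
  have hsumNC : ∑ γ ∈ NZ \ CubeSet F, S m γ = 2 * (n : ℤ) * B := by
    rw [Finset.sum_congr rfl hncval, Finset.sum_const, hNCcard, nsmul_eq_mul]
    push_cast; ring
  rw [hsumC, hsumNC, hsum0] at hsplit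
  have hnz : (n : ℤ) ≠ 0 := by exact_mod_cast (by omega : n ≠ 0)
  have hAB : A = -2 * B := by
    have h : (n : ℤ) * (A + 2 * B) = 0 := by linear_combination hsplit
    rcases mul_eq_zero.mp h with h' | h'
    · exact absurd h' hnz
    · linarith
  -- second moment
  have hcast : ((2:ℤ) ^ m - 1) = 3 * (n : ℤ) := by
    have h := congrArg (Nat.cast : ℕ → ℤ) hn
    rw [Nat.cast_sub (show 1 ≤ 2 ^ m by omega)] at h
    push_cast at h
    linarith
  have hsum0sq : ∑ γ ∈ NZ, (S m γ) ^ 2 = 6 * 2 ^ m * (n : ℤ) := by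
    have h1 : ∑ γ ∈ NZ, (S m γ) ^ 2 + (S m (0:F)) ^ 2 = ∑ γ : F, (S m γ) ^ 2 :=
      Finset.sum_erase_add (univ : Finset F) (fun γ => (S m γ) ^ 2) (mem_univ (0 : F))
    rw [sum_S_sq hF hm2 hm, S_zero hF] at h1
    have : ∑ γ ∈ NZ, (S m γ) ^ 2 = 2 * 2 ^ m * (2 ^ m - 1) := by linarith [h1]; 
    rw [this, hcast]; ring
  have hsplit2 := Finset.sum_sdiff (f := fun γ => (S m γ) ^ 2) hCsub
  have hsumC2 : ∑ γ ∈ CubeSet F, (S m γ) ^ 2 = (n : ℤ) * A ^ 2 := by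
    rw [Finset.sum_congr rfl (fun z hz => by rw [hcubeval z hz]), Finset.sum_const, hCcard,
      nsmul_eq_mul]
  have hsumNC2 : ∑ γ ∈ NZ \ CubeSet F, (S m γ) ^ 2 = 2 * (n : ℤ) * B ^ 2 := by
    rw [Finset.sum_congr rfl (fun z hz => by rw [hncval z hz]), Finset.sum_const, hNCcard,
      nsmul_eq_mul]
    push_cast; ring
  rw [hsumC2, hsumNC2, hsum0sq] at hsplit2
  have hA2 : A ^ 2 = 4 * B ^ 2 := by rw [hAB]; ring
  rw [hA2] at hsplit2
  have h6 : 6 * (n : ℤ) * B ^ 2 = 6 * (n : ℤ) * s ^ 2 := by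
    linear_combination hsplit2 + 6 * (n : ℤ) * hq_s
  have h66 : (6 : ℤ) * (n : ℤ) ≠ 0 := by
    apply mul_ne_zero (by norm_num) hnz
  have hBsq : B ^ 2 = s ^ 2 := by
    apply mul_left_cancel₀ h66
    linear_combination h6
  have hBval : B = s ∨ B = -s := by
    have h : (B - s) * (B + s) = 0 := by linear_combination hBsq
    rcases mul_eq_zero.mp h with h' | h'
    · left; linarith
    · right; linarith
  by_cases hβn : β ^ n = 1
  · obtain ⟨c, hc, hc3⟩ := (cube_iff hF hm2 hm hn β).mpr hβn
    have hSβ : S m β = A := by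
      rw [← hc3, hA]
      have h := S_mul_cube (m := m) (1 : F) hc
      rwa [one_mul] at h
    rw [hSβ, hAB]
    rcases hBval with h | h <;> rw [h] <;> linarith
  · obtain ⟨hg0, hgn⟩ := hnc_char g hg
    have hSβ : S m β = B := by
      rw [hB]; exact S_noncube_const hF hm2 hm hn hβ hβn hg0 hgn
    rcases hBval with h | h <;> rw [hSβ, h] <;> linarith


theorem main_count (hF : Fintype.card F = 2 ^ m) (hm0 : 0 < m) {k : ℕ} (hk : 0 < k)
    (hgcd : Nat.gcd k m = 1) (hkm : 2 * k < m) {α : F} (hα : α ≠ 0) :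
    (((univ : Finset (F × F)).filter fun p : F × F =>
        p.1 ^ 3 = α * (p.2 ^ (2 ^ k) + p.2)).card : ℤ) = 2 ^ m + S m α⁻¹ := by
  set q : ℤ := 2 ^ m with hq
  set N : ℕ := ((univ : Finset (F × F)).filter fun p : F × F =>
      p.1 ^ 3 = α * (p.2 ^ (2 ^ k) + p.2)).card with hN
  have hk_le : k ≤ m := by omega
  have hgcd' : Nat.gcd (m - k) m = 1 := by
    have h1 : Nat.gcd (m - k) m = Nat.gcd (m - k) k := by
      have h := Nat.gcd_add_self_right (m - k) k
      rwa [show k + (m - k) = m by omega] at h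
    have h2 : Nat.gcd k m = Nat.gcd k (m - k) := by
      have h := Nat.gcd_add_self_right k (m - k)
      rwa [show m - k + k = m by omega] at h
    rw [h1, Nat.gcd_comm, ← h2, hgcd]
  -- condition equivalence
  have hcond : ∀ c : F, ((c * α) ^ 2 ^ (m - k) + c * α = 0) ↔ (c = 0 ∨ c = α⁻¹) := by
    intro c
    rw [char_two_eq_iff]
    constructor
    · intro h
      rcases fixed_of_pow hF hgcd' h with h1 | h1
      · left
        rcases mul_eq_zero.mp h1 with h2 | h2
        · exact h2
        · exact absurd h2 hα
      · right
        calc c = c * (α * α⁻¹) := by rw [mul_inv_cancel₀ hα, mul_one]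
          _ = (c * α) * α⁻¹ := by ring
          _ = α⁻¹ := by rw [h1, one_mul]
    · rintro (rfl | rfl)
      · simp [zero_pow (pow_pos two_pos (m - k)).ne']
      · rw [inv_mul_cancel₀ hα, one_pow]
  -- character splitting
  have hsplit : ∀ c x t : F, χ m (c * (x ^ 3 + α * (t ^ 2 ^ k + t))) =
      χ m (c * x ^ 3) * χ m (((c * α) ^ 2 ^ (m - k) + c * α) * t) := by
    intro c x t
    have e1 : c * (x ^ 3 + α * (t ^ 2 ^ k + t)) =
        c * x ^ 3 + ((c * α) * t ^ 2 ^ k + (c * α) * t) := by ring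
    rw [e1, χ_add hF]
    congr 1
    have e2 : ((c * α) * t ^ 2 ^ k) ^ 2 ^ (m - k) = (c * α) ^ 2 ^ (m - k) * t := by
      rw [mul_pow, ← pow_mul, ← pow_add, show k + (m - k) = m by omega, pow_card hF]
    have e3 : χ m ((c * α) * t ^ 2 ^ k) = χ m ((c * α) ^ 2 ^ (m - k) * t) := by
      rw [← χ_pow_pow hF (m - k) ((c * α) * t ^ 2 ^ k), e2]
    rw [add_mul, χ_add hF, χ_add hF, e3]
  -- the big computation
  have hmain : q * (N : ℤ) = ∑ c : F,
      (∑ x : F, χ m (c * x ^ 3)) * (if (c * α) ^ 2 ^ (m - k) + c * α = 0 then q else 0) := by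
    have h1 : (N : ℤ) = ∑ x : F, ∑ t : F,
        (if x ^ 3 = α * (t ^ 2 ^ k + t) then (1 : ℤ) else 0) := by
      rw [hN, Finset.card_filter]
      push_cast
      rw [Fintype.sum_prod_type]
    calc q * (N : ℤ)
        = ∑ x : F, ∑ t : F, (if x ^ 3 = α * (t ^ 2 ^ k + t) then q else 0) := by
          rw [h1, Finset.mul_sum]
          refine Finset.sum_congr rfl fun x _ => ?_
          rw [Finset.mul_sum]
          exact Finset.sum_congr rfl fun t _ => by rw [mul_ite, mul_one, mul_zero]
      _ = ∑ x : F, ∑ t : F, (if x ^ 3 + α * (t ^ 2 ^ k + t) = 0 then q else 0) := by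
          simp only [char_two_eq_iff]
      _ = ∑ x : F, ∑ t : F, ∑ c : F, χ m ((x ^ 3 + α * (t ^ 2 ^ k + t)) * c) := by
          exact Finset.sum_congr rfl fun x _ => Finset.sum_congr rfl fun t _ =>
            (χ_sum_mul hF hm0 _).symm
      _ = ∑ x : F, ∑ c : F, ∑ t : F, χ m ((x ^ 3 + α * (t ^ 2 ^ k + t)) * c) := by
          exact Finset.sum_congr rfl fun x _ => Finset.sum_comm
      _ = ∑ c : F, ∑ x : F, ∑ t : F, χ m ((x ^ 3 + α * (t ^ 2 ^ k + t)) * c) :=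
          Finset.sum_comm
      _ = ∑ c : F, ∑ x : F, ∑ t : F, χ m (c * (x ^ 3 + α * (t ^ 2 ^ k + t))) := by
          exact Finset.sum_congr rfl fun c _ => Finset.sum_congr rfl fun x _ =>
            Finset.sum_congr rfl fun t _ => (by rw [mul_comm])
      _ = ∑ c : F, ∑ x : F, ∑ t : F,
            χ m (c * x ^ 3) * χ m (((c * α) ^ 2 ^ (m - k) + c * α) * t) := by
          exact Finset.sum_congr rfl fun c _ => Finset.sum_congr rfl fun x _ =>
            Finset.sum_congr rfl fun t _ => hsplit c x t
      _ = ∑ c : F,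
            (∑ x : F, χ m (c * x ^ 3)) * (∑ t : F, χ m (((c * α) ^ 2 ^ (m - k) + c * α) * t)) := by
          refine Finset.sum_congr rfl fun c _ => ?_
          rw [Finset.sum_mul]
          exact Finset.sum_congr rfl fun x _ => by rw [Finset.mul_sum]
      _ = ∑ c : F,
            (∑ x : F, χ m (c * x ^ 3)) * (if (c * α) ^ 2 ^ (m - k) + c * α = 0 then q else 0) := by
          exact Finset.sum_congr rfl fun c _ => by rw [χ_sum_mul hF hm0]
  -- restrict to the two values
  have hαinv : (α⁻¹ : F) ≠ 0 := inv_ne_zero hα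
  have hpair : ({0, α⁻¹} : Finset F) ⊆ univ := Finset.subset_univ _
  have hvanish : ∀ c ∈ (univ : Finset F), c ∉ ({0, α⁻¹} : Finset F) →
      (∑ x : F, χ m (c * x ^ 3)) * (if (c * α) ^ 2 ^ (m - k) + c * α = 0 then q else 0) = 0 := by
    intro c _ hc
    simp only [Finset.mem_insert, Finset.mem_singleton] at hc
    push_neg at hc
    rw [if_neg, mul_zero]
    intro hcontra
    rcases (hcond c).mp hcontra with h | h
    · exact hc.1 h
    · exact hc.2 h
  have hc0 : ((0 : F) * α) ^ 2 ^ (m - k) + (0 : F) * α = 0 := by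
    simp [zero_pow (pow_pos two_pos (m - k)).ne']
  have hcinv : ((α⁻¹ : F) * α) ^ 2 ^ (m - k) + α⁻¹ * α = 0 := by
    rw [inv_mul_cancel₀ hα, one_pow]
    exact CharTwo.add_self_eq_zero 1
  have hz : (∑ x : F, χ m ((0 : F) * x ^ 3)) = q := by
    have h : ∀ x : F, χ m ((0 : F) * x ^ 3) = 1 := fun x => by rw [zero_mul, χ_zero]
    rw [Finset.sum_congr rfl fun x _ => h x, Finset.sum_const, Finset.card_univ, hF]
    simp [hq]
  have hSdef : (∑ x : F, χ m (α⁻¹ * x ^ 3)) = S m α⁻¹ := rfl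
  have hq0 : q ≠ 0 := by rw [hq]; positivity
  have hfinal : q * (N : ℤ) = q * (q + S m α⁻¹) := by
    rw [hmain, ← Finset.sum_subset hpair hvanish,
      Finset.sum_pair (show (0 : F) ≠ α⁻¹ from fun h => hαinv h.symm),
      if_pos hc0, if_pos hcinv, hz, hSdef]
    ring
  exact mul_left_cancel₀ hq0 hfinal


end Stmt6Aux

/-- For `m` even, `gcd(k,m)=1`, `k < m/2` and nonzero `α ∈ 𝔽_{2^m}`, the
number of affine points `(x,t) ∈ 𝔽_{2^m}²` on the curve `X³ = α(T^(2^k) + T)` is at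
least `2^(m/2)(2^(m/2) - 2(2^k - 1))`, and in particular is positive. -/

theorem stmt6 (m k : ℕ) (hm : Even m) (hm0 : 0 < m) (hk : 0 < k)
    (hgcd : Nat.gcd k m = 1) (hkm : 2 * k < m)
    (α : GaloisField 2 m) (hα : α ≠ 0) :
    2 ^ (m / 2) * (2 ^ (m / 2) - 2 * (2 ^ k - 1)) ≤
      {p : GaloisField 2 m × GaloisField 2 m |
        p.1 ^ 3 = α * (p.2 ^ (2 ^ k) + p.2)}.ncard ∧
    0 < {p : GaloisField 2 m × GaloisField 2 m |
        p.1 ^ 3 = α * (p.2 ^ (2 ^ k) + p.2)}.ncard := by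
  classical
  letI : Fintype (GaloisField 2 m) := Fintype.ofFinite _
  have hF : Fintype.card (GaloisField 2 m) = 2 ^ m := by
    rw [← Nat.card_eq_fintype_card]
    exact GaloisField.card 2 m (by omega)
  have hset : {p : GaloisField 2 m × GaloisField 2 m | p.1 ^ 3 = α * (p.2 ^ 2 ^ k + p.2)} =
      ↑((univ : Finset (GaloisField 2 m × GaloisField 2 m)).filter fun p => p.1 ^ 3 = α * (p.2 ^ 2 ^ k + p.2)) := by
    ext p; simp
  rw [hset, Set.ncard_coe_finset]
  set N : ℕ := ((univ : Finset (GaloisField 2 m × GaloisField 2 m)).filter fun p =>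
      p.1 ^ 3 = α * (p.2 ^ 2 ^ k + p.2)).card with hN
  have hcount := Stmt6Aux.main_count hF hm0 hk hgcd hkm hα
  have hbound := Stmt6Aux.S_ge_neg hF hm hm0 (inv_ne_zero hα)
  have hm4 : 4 ≤ m := by
    obtain ⟨r, hr⟩ := hm; omega
  have hs4 : 4 ≤ 2 ^ (m / 2) := by
    calc (4:ℕ) = 2 ^ 2 := by norm_num
      _ ≤ 2 ^ (m / 2) := Nat.pow_le_pow_right (by norm_num) (by omega)
  have hs2 : 2 ≤ 2 ^ (m / 2) := by omega
  have hq : (2:ℤ) ^ m = 2 ^ (m / 2) * 2 ^ (m / 2) := by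
    rw [← pow_add]
    congr 1
    obtain ⟨r, hr⟩ := hm
    omega
  have hNge : ((2 ^ (m / 2) * (2 ^ (m / 2) - 2) : ℕ) : ℤ) ≤ (N : ℤ) := by
    have hcast : ((2 ^ (m / 2) * (2 ^ (m / 2) - 2) : ℕ) : ℤ) =
        (2:ℤ) ^ (m / 2) * ((2:ℤ) ^ (m / 2) - 2) := by
      rw [Nat.cast_mul, Nat.cast_sub hs2]
      push_cast
      ring
    rw [hcast, hcount]
    nlinarith [hbound, hq]
  have hNge' : 2 ^ (m / 2) * (2 ^ (m / 2) - 2) ≤ N := by exact_mod_cast hNge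
  constructor
  · have h1 : 2 ^ (m / 2) - 2 * (2 ^ k - 1) ≤ 2 ^ (m / 2) - 2 := by
      have : 2 ≤ 2 * (2 ^ k - 1) := by
        have : 1 ≤ 2 ^ k - 1 := by
          have : 2 ≤ 2 ^ k := by
            calc (2:ℕ) = 2 ^ 1 := by norm_num
              _ ≤ 2 ^ k := Nat.pow_le_pow_right (by norm_num) (by omega)
          omega
        omega
      exact Nat.sub_le_sub_left this _
    calc 2 ^ (m / 2) * (2 ^ (m / 2) - 2 * (2 ^ k - 1))
        ≤ 2 ^ (m / 2) * (2 ^ (m / 2) - 2) := Nat.mul_le_mul_left _ h1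
      _ ≤ N := hNge'
  · have : 0 < 2 ^ (m / 2) * (2 ^ (m / 2) - 2) :=
      Nat.mul_pos (by omega) (by omega)
    omega
end

section
/- Let $m$ be even and $k$ coprime to $m$. Then $\gcd(2^k+1, 2^m-1) = 3$, and consequently the map $a \mapsto a^{2^k+1}$ on $\mathbb{F}_{2^m}^*$ has image exactly the subgroup of cubes $\{x^3 : x \in \mathbb{F}_{2^m}^*\}$. -/
/-- For `m` even and `gcd(k,m)=1`, we have `gcd(2^k+1, 2^m-1) = 3`, and the
image of the map `a ↦ a^(2^k+1)` on nonzero elements of `𝔽_{2^m}` is exactly the set of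
nonzero cubes. -/
theorem stmt9 (m k : ℕ) (hm : Even m) (hm0 : 0 < m) (hk : 0 < k)
    (hgcd : Nat.gcd k m = 1) :
    Nat.gcd (2 ^ k + 1) (2 ^ m - 1) = 3 ∧
    {x : GaloisField 2 m | ∃ a : GaloisField 2 m, a ≠ 0 ∧ x = a ^ (2 ^ k + 1)} =
      {x : GaloisField 2 m | ∃ y : GaloisField 2 m, y ≠ 0 ∧ x = y ^ 3} := by
  -- k is odd
  have hkodd : Odd k := by
    rcases Nat.even_or_odd k with hke | hko
    · exfalso
      obtain ⟨j, rfl⟩ := hke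
      obtain ⟨i, rfl⟩ := hm
      have : 2 ∣ Nat.gcd (j + j) (i + i) := Nat.dvd_gcd ⟨j, by ring⟩ ⟨i, by ring⟩
      omega
    · exact hko
  -- 3 divides 2^k + 1
  have h3d : 3 ∣ 2 ^ k + 1 := by
    obtain ⟨j, rfl⟩ := hkodd
    obtain ⟨c, hc⟩ : (3 : ℕ) ∣ 4 ^ j - 1 := by
      simpa using Nat.sub_dvd_pow_sub_pow 4 1 j
    have h4pos : 1 ≤ 4 ^ j := Nat.one_le_pow _ _ (by norm_num)
    have h2 : 2 ^ (2 * j + 1) = 2 * 4 ^ j := by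
      rw [pow_succ, pow_mul]; ring
    have hs : 4 ^ j = 3 * c + 1 := by omega
    exact ⟨2 * c + 1, by rw [h2, hs]; ring⟩
  -- 3 divides 2^m - 1
  have h3n : 3 ∣ 2 ^ m - 1 := by
    obtain ⟨i, rfl⟩ := hm
    obtain ⟨c, hc⟩ : (3 : ℕ) ∣ 4 ^ i - 1 := by
      simpa using Nat.sub_dvd_pow_sub_pow 4 1 i
    have h4pos : 1 ≤ 4 ^ i := Nat.one_le_pow _ _ (by norm_num)
    have h2 : 2 ^ (i + i) = 4 ^ i := by
      rw [show (4 : ℕ) = 2 ^ 2 by norm_num, ← pow_mul, two_mul]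
    rw [h2]; exact ⟨c, hc⟩
  have hnpos : 1 ≤ 2 ^ m := Nat.one_le_pow _ _ (by norm_num)
  -- gcd divides 3
  have hgdvd : Nat.gcd (2 ^ k + 1) (2 ^ m - 1) ∣ 3 := by
    set g := Nat.gcd (2 ^ k + 1) (2 ^ m - 1) with hg
    have hgd : g ∣ 2 ^ k + 1 := Nat.gcd_dvd_left _ _
    have hgn : g ∣ 2 ^ m - 1 := Nat.gcd_dvd_right _ _
    have h2kpos : 1 ≤ 2 ^ (2 * k) := Nat.one_le_pow _ _ (by norm_num)
    have hg2k : g ∣ 2 ^ (2 * k) - 1 := by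
      refine hgd.trans ?_
      have hZ : ((2 ^ k + 1 : ℕ) : ℤ) ∣ ((2 ^ (2 * k) - 1 : ℕ) : ℤ) := by
        push_cast [h2kpos]
        refine ⟨2 ^ k - 1, ?_⟩
        rw [two_mul, pow_add]; ring
      exact_mod_cast hZ
    -- work in ZMod g
    have hpow1 : (2 : ZMod g) ^ (2 * k) = 1 := by
      have h0 : ((2 ^ (2 * k) - 1 : ℕ) : ZMod g) = 0 :=
        (ZMod.natCast_eq_zero_iff _ _).mpr hg2k
      have he : (2 ^ (2 * k) : ℕ) = (2 ^ (2 * k) - 1) + 1 := by omega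
      have h1 : ((2 ^ (2 * k) : ℕ) : ZMod g) = 1 := by
        rw [he, Nat.cast_add, Nat.cast_one, h0, zero_add]
      push_cast at h1
      exact h1
    have hpow2 : (2 : ZMod g) ^ m = 1 := by
      have h0 : ((2 ^ m - 1 : ℕ) : ZMod g) = 0 :=
        (ZMod.natCast_eq_zero_iff _ _).mpr hgn
      have he : (2 ^ m : ℕ) = (2 ^ m - 1) + 1 := by omega
      have h1 : ((2 ^ m : ℕ) : ZMod g) = 1 := by
        rw [he, Nat.cast_add, Nat.cast_one, h0, zero_add]
      push_cast at h1
      exact h1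
    have hgcd2 : Nat.gcd (2 * k) m = 2 := by
      have h1 : Nat.gcd (2 * k) m = Nat.gcd 2 m :=
        Nat.Coprime.gcd_mul_right_cancel 2 hgcd
      rw [h1]
      obtain ⟨i, rfl⟩ := hm
      exact Nat.gcd_eq_left ⟨i, by ring⟩
    have hfin : (2 : ZMod g) ^ Nat.gcd (2 * k) m = 1 := pow_gcd_eq_one.mpr ⟨hpow1, hpow2⟩
    rw [hgcd2] at hfin
    have h30 : ((3 : ℕ) : ZMod g) = 0 := by
      push_cast
      linear_combination hfin
    exact (ZMod.natCast_eq_zero_iff _ _).mp h30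
  have hG : Nat.gcd (2 ^ k + 1) (2 ^ m - 1) = 3 :=
    Nat.dvd_antisymm hgdvd (Nat.dvd_gcd h3d h3n)
  refine ⟨hG, ?_⟩
  -- now the set equality
  have hcardK : Nat.card (GaloisField 2 m) = 2 ^ m := GaloisField.card 2 m hm0.ne'
  have hcardU : Nat.card (GaloisField 2 m)ˣ = 2 ^ m - 1 := by
    rw [Nat.card_units, hcardK]
  ext x
  simp only [Set.mem_setOf_eq]
  constructor
  · rintro ⟨a, ha, rfl⟩
    obtain ⟨t, ht⟩ := h3d
    exact ⟨a ^ t, pow_ne_zero _ ha, by rw [← pow_mul, mul_comm t 3, ← ht]⟩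
  · rintro ⟨y, hy, rfl⟩
    set u : (GaloisField 2 m)ˣ := Units.mk0 y hy with hu
    have hun : u ^ (2 ^ m - 1) = 1 := by
      rw [← hcardU]; exact pow_card_eq_one'
    have hbez := Nat.gcd_eq_gcd_ab (2 ^ k + 1) (2 ^ m - 1)
    rw [hG] at hbez
    set A := Nat.gcdA (2 ^ k + 1) (2 ^ m - 1) with hA
    set B := Nat.gcdB (2 ^ k + 1) (2 ^ m - 1) with hB
    have key : u ^ (3 : ℕ) = (u ^ A) ^ (2 ^ k + 1) := by
      calc u ^ (3 : ℕ) = u ^ ((3 : ℕ) : ℤ) := (zpow_natCast u 3).symm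
        _ = u ^ (((2 ^ k + 1 : ℕ) : ℤ) * A + ((2 ^ m - 1 : ℕ) : ℤ) * B) := by
            rw [← hbez]
        _ = (u ^ A) ^ ((2 ^ k + 1 : ℕ) : ℤ) * (u ^ ((2 ^ m - 1 : ℕ) : ℤ)) ^ B := by
            rw [zpow_add, mul_comm ((2 ^ k + 1 : ℕ) : ℤ) A, zpow_mul, zpow_mul]
        _ = (u ^ A) ^ (2 ^ k + 1) := by
            rw [zpow_natCast, zpow_natCast, hun, one_zpow, mul_one]
    refine ⟨((u ^ A : (GaloisField 2 m)ˣ) : GaloisField 2 m), Units.ne_zero _, ?_⟩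
    have hval := congrArg Units.val key
    simp only [Units.val_pow_eq_pow_val] at hval
    simpa [hu] using hval
end

section
/- Let $m, k$ be positive integers with $\gcd(k,m)=1$, let $\alpha, \beta \in \mathbb{F}_{2^m}$ with $\beta \neq 0$, and let $a, b \in \mathbb{F}_{2^m}$ with $ab \neq 0$. Then the linear map $T_{a,b}(Y) = a^{2^{3k}+2^{2k}} Y^{2^{2k}} + \alpha a^{2^{2k}} b^{2^k} Y^{2^k} + \beta b^{2^k+1} Y$ has trivial kernel on $\mathbb{F}_{2^m}$ if and only if the polynomial $X^{2^k+1} + \alpha X + \beta$ has no root of the form $X = (a^{2^{2k}}/b^{2^k}) z^{2^k - 1}$ with $z \in \mathbb{F}_{2^m}^*$; in particular, if $X^{2^k+1} + \alpha X + \beta$ has no root in $\mathbb{F}_{2^m}$, then $T_{a,b}$ has trivial kernel for all $a, b$ with $ab \neq 0$. -/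
lemma stmt13_key {F : Type*} [Field F] (q : ℕ) (hq : 1 ≤ q) (α β a b Y : F)
    (hb : b ≠ 0) (hY : Y ≠ 0) :
    a ^ (q^3 + q^2) * Y ^ (q^2) + α * a ^ (q^2) * b ^ q * Y ^ q + β * b ^ (q+1) * Y
    = b ^ (q+1) * Y * ((a ^ (q^2) / b ^ q * (b*Y) ^ (q-1)) ^ (q+1)
        + α * (a ^ (q^2) / b ^ q * (b*Y) ^ (q-1)) + β) := by
  have hbY : b * Y ≠ 0 := mul_ne_zero hb hY
  obtain ⟨n, rfl⟩ : ∃ n, q = n + 1 := ⟨q - 1, by omega⟩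
  rw [Nat.add_sub_cancel]
  have e : a ^ (n+1) ^ 2 / b ^ (n+1) * (b * Y) ^ n = a ^ (n+1) ^ 2 * Y ^ n / b := by
    field_simp; ring
  rw [e, div_pow, mul_pow]
  field_simp
  ring

/-- For `gcd(k,m)=1`, `β ≠ 0` and `ab ≠ 0`, the linearized map
`T_{a,b}(Y) = a^(2^(3k)+2^(2k)) Y^(2^(2k)) + α a^(2^(2k)) b^(2^k) Y^(2^k) + β b^(2^k+1) Y`
has trivial kernel on `𝔽_{2^m}` iff `X^(2^k+1) + αX + β` has no root of the form
`X = (a^(2^(2k))/b^(2^k))·z^(2^k-1)` with `z ≠ 0`; in particular if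
`X^(2^k+1) + αX + β` has no root at all in `𝔽_{2^m}` then `T_{a,b}` has trivial kernel. -/
theorem stmt13 (m k : ℕ) (hm : 0 < m) (hk : 0 < k) (hgcd : Nat.gcd k m = 1)
    (α β : GaloisField 2 m) (hβ : β ≠ 0)
    (a b : GaloisField 2 m) (hab : a * b ≠ 0)
    (T : GaloisField 2 m → GaloisField 2 m)
    (hT : ∀ Y, T Y = a ^ (2 ^ (3 * k) + 2 ^ (2 * k)) * Y ^ (2 ^ (2 * k)) +
      α * a ^ (2 ^ (2 * k)) * b ^ (2 ^ k) * Y ^ (2 ^ k) + β * b ^ (2 ^ k + 1) * Y) :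
    ((∀ Y : GaloisField 2 m, T Y = 0 → Y = 0) ↔
      ¬∃ z : GaloisField 2 m, z ≠ 0 ∧
        (a ^ (2 ^ (2 * k)) / b ^ (2 ^ k) * z ^ (2 ^ k - 1)) ^ (2 ^ k + 1) +
          α * (a ^ (2 ^ (2 * k)) / b ^ (2 ^ k) * z ^ (2 ^ k - 1)) + β = 0) ∧
    ((∀ X : GaloisField 2 m, X ^ (2 ^ k + 1) + α * X + β ≠ 0) →
      ∀ Y : GaloisField 2 m, T Y = 0 → Y = 0) := by
  have ha : a ≠ 0 := fun h => hab (by rw [h, zero_mul])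
  have hb : b ≠ 0 := fun h => hab (by rw [h, mul_zero])
  have hq : 1 ≤ 2 ^ k := Nat.one_le_two_pow
  have e2 : 2 ^ (2 * k) = (2 ^ k) ^ 2 := by rw [mul_comm, pow_mul]
  have e3 : 2 ^ (3 * k) = (2 ^ k) ^ 3 := by rw [mul_comm, pow_mul]
  have hkey : ∀ Y : GaloisField 2 m, Y ≠ 0 →
      T Y = b ^ (2 ^ k + 1) * Y *
        ((a ^ (2 ^ (2 * k)) / b ^ (2 ^ k) * (b * Y) ^ (2 ^ k - 1)) ^ (2 ^ k + 1)
          + α * (a ^ (2 ^ (2 * k)) / b ^ (2 ^ k) * (b * Y) ^ (2 ^ k - 1)) + β) := by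
    intro Y hY
    rw [hT, e2, e3]
    exact stmt13_key (2 ^ k) hq α β a b Y hb hY
  have main : (∀ Y : GaloisField 2 m, T Y = 0 → Y = 0) ↔
      ¬∃ z : GaloisField 2 m, z ≠ 0 ∧
        (a ^ (2 ^ (2 * k)) / b ^ (2 ^ k) * z ^ (2 ^ k - 1)) ^ (2 ^ k + 1) +
          α * (a ^ (2 ^ (2 * k)) / b ^ (2 ^ k) * z ^ (2 ^ k - 1)) + β = 0 := by
    constructor
    · rintro h ⟨z, hz, hzeq⟩
      have hY : z / b ≠ 0 := div_ne_zero hz hb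
      have hbz : b * (z / b) = z := by field_simp
      have hTz : T (z / b) = 0 := by
        rw [hkey _ hY, hbz, hzeq, mul_zero]
      exact hY (h _ hTz)
    · intro hne Y hTY
      by_contra hY
      refine hne ⟨b * Y, mul_ne_zero hb hY, ?_⟩
      have h0 : b ^ (2 ^ k + 1) * Y ≠ 0 := mul_ne_zero (pow_ne_zero _ hb) hY
      have := (hkey Y hY).symm.trans hTY
      exact (mul_eq_zero.mp this).resolve_left h0
  refine ⟨main, fun hroot Y hTY => ?_⟩
  by_contra hY
  have h0 : b ^ (2 ^ k + 1) * Y ≠ 0 := mul_ne_zero (pow_ne_zero _ hb) hY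
  have := (hkey Y hY).symm.trans hTY
  exact hroot _ ((mul_eq_zero.mp this).resolve_left h0)
end

section
/- Let $m$ be even, $j$ even, $k$ coprime to $m$. Then the set $S = \{a^{2^k+1}(t^{2^k}+t)^{1-2^j} : a, t \in \mathbb{F}_{2^m}, t^{2^k}+t \neq 0\} \cup \{0\}$ consists exactly of $0$ together with all nonzero cubes of $\mathbb{F}_{2^m}$; hence a nonzero $\alpha \in \mathbb{F}_{2^m}$ lies outside $S$ if and only if $\alpha$ is a non-cube. -/
/-- If `d` divides `2^a - 1` and `2^b - 1`, it divides `2^(gcd a b) - 1`. -/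
lemma gcd_two_pow_sub_one_dvd (d a b : ℕ) (hd : 0 < d) (ha : d ∣ 2 ^ a - 1)
    (hb : d ∣ 2 ^ b - 1) : d ∣ 2 ^ Nat.gcd a b - 1 := by
  haveI : NeZero d := ⟨hd.ne'⟩
  have key : ∀ n : ℕ, d ∣ 2 ^ n - 1 ↔ (2 : ZMod d) ^ n = 1 := by
    intro n
    rw [← ZMod.natCast_eq_zero_iff (2 ^ n - 1) d,
      Nat.cast_sub (Nat.one_le_two_pow), sub_eq_zero]
    push_cast
    tauto
  rw [key]
  exact orderOf_dvd_iff_pow_eq_one.mp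
    (Nat.dvd_gcd (orderOf_dvd_of_pow_eq_one ((key a).mp ha))
      (orderOf_dvd_of_pow_eq_one ((key b).mp hb)))

/-- For `m` even, `gcd(k,m)=1` and `j` even, the set
`S = {a^(2^k+1)(t^(2^k)+t)^(1-2^j) : a,t ∈ 𝔽_{2^m}, t^(2^k)+t ≠ 0} ∪ {0}` consists
exactly of `0` together with all nonzero cubes; hence a nonzero `α` lies outside `S`
iff `α` is a non-cube. (Here `z^(1-2^j)` means `(z⁻¹)^(2^j-1)`.) -/
theorem stmt15 (m k j : ℕ) (hm : Even m) (hm0 : 0 < m) (hk : 0 < k)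
    (hgcd : Nat.gcd k m = 1) (hj : Even j) (hj0 : 0 < j) :
    ({w : GaloisField 2 m | ∃ a t : GaloisField 2 m, t ^ (2 ^ k) + t ≠ 0 ∧
        w = a ^ (2 ^ k + 1) * ((t ^ (2 ^ k) + t)⁻¹) ^ (2 ^ j - 1)} ∪ {0}) =
      insert (0 : GaloisField 2 m)
        {x : GaloisField 2 m | ∃ y : GaloisField 2 m, y ≠ 0 ∧ x = y ^ 3} ∧
    ∀ α : GaloisField 2 m, α ≠ 0 →
      (α ∉ ({w : GaloisField 2 m | ∃ a t : GaloisField 2 m, t ^ (2 ^ k) + t ≠ 0 ∧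
          w = a ^ (2 ^ k + 1) * ((t ^ (2 ^ k) + t)⁻¹) ^ (2 ^ j - 1)} ∪ {0}) ↔
        ¬∃ y : GaloisField 2 m, y ≠ 0 ∧ α = y ^ 3) := by
  classical
  set F := GaloisField 2 m with hFdef
  haveI : Fintype F := Fintype.ofFinite F
  have hF : Fintype.card F = 2 ^ m := by
    rw [← Nat.card_eq_fintype_card]; exact GaloisField.card 2 m hm0.ne'
  have hm2 : 2 ≤ m := by
    rcases hm with ⟨r, rfl⟩; omega
  -- k is odd
  have hkodd : Odd k := by
    rcases Nat.even_or_odd k with he | ho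
    · exfalso
      have h2 : 2 ∣ Nat.gcd k m := Nat.dvd_gcd he.two_dvd hm.two_dvd
      rw [hgcd] at h2; omega
    · exact ho
  -- divisibility facts
  have h3k : 3 ∣ 2 ^ k + 1 := by
    have : ((2 ^ k + 1 : ℕ) : ZMod 3) = 0 := by
      push_cast
      rw [show (2 : ZMod 3) = -1 by decide, hkodd.neg_one_pow]
      ring
    exact (ZMod.natCast_eq_zero_iff _ _).mp this
  have heven_dvd : ∀ n : ℕ, Even n → 3 ∣ 2 ^ n - 1 := by
    rintro n ⟨b, rfl⟩
    have h := Nat.sub_dvd_pow_sub_pow 4 1 b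
    norm_num at h
    rwa [show (4 : ℕ) ^ b = 2 ^ (b + b) by rw [← two_mul, pow_mul]; norm_num] at h
  have h3j : 3 ∣ 2 ^ j - 1 := heven_dvd j hj
  have h3m : 3 ∣ 2 ^ m - 1 := heven_dvd m hm
  have h1k : 1 ≤ 2 ^ k := Nat.one_le_two_pow
  -- 2^k + 1 divides 2^(2k) - 1
  have h2k2k : 2 ^ k + 1 ∣ 2 ^ (2 * k) - 1 := by
    refine ⟨2 ^ k - 1, ?_⟩
    have h2 : 1 ≤ 2 ^ (2 * k) := Nat.one_le_two_pow
    zify [h1k, h2]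
    rw [two_mul, pow_add]; ring
  -- gcd(2k, m) = 2
  have hg2 : Nat.gcd (2 * k) m = 2 := by
    have h1 : Nat.gcd (2 * k) m ∣ 2 := by
      have hh : Nat.gcd (2 * k) m ∣ Nat.gcd (2 * k) (2 * m) :=
        Nat.dvd_gcd (Nat.gcd_dvd_left _ _) ((Nat.gcd_dvd_right _ _).trans (dvd_mul_left m 2))
      rwa [Nat.gcd_mul_left, hgcd, mul_one] at hh
    have h2 : 2 ∣ Nat.gcd (2 * k) m := Nat.dvd_gcd (dvd_mul_right 2 k) hm.two_dvd
    exact Nat.dvd_antisymm h1 h2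
  -- gcd(2^k+1, 2^m-1) divides 3
  have hd3 : Nat.gcd (2 ^ k + 1) (2 ^ m - 1) ∣ 3 := by
    have hdpos : 0 < Nat.gcd (2 ^ k + 1) (2 ^ m - 1) :=
      Nat.gcd_pos_of_pos_left _ (Nat.succ_pos _)
    have h := gcd_two_pow_sub_one_dvd (Nat.gcd (2 ^ k + 1) (2 ^ m - 1)) (2 * k) m hdpos
      ((Nat.gcd_dvd_left _ _).trans h2k2k) (Nat.gcd_dvd_right _ _)
    rw [hg2] at h
    norm_num at h
    exact h
  -- key A: every nonzero cube is a (2^k+1)-th power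
  have keyA : ∀ c : F, c ≠ 0 → ∃ a : F, a ≠ 0 ∧ a ^ (2 ^ k + 1) = c ^ 3 := by
    intro c hc
    set u : Fˣ := Units.mk0 c hc with hu
    obtain ⟨e, he⟩ := hd3
    have hbez := Nat.gcd_eq_gcd_ab (2 ^ k + 1) (2 ^ m - 1)
    set A := Nat.gcdA (2 ^ k + 1) (2 ^ m - 1) with hA
    set B := Nat.gcdB (2 ^ k + 1) (2 ^ m - 1) with hB
    have hcard : u ^ (2 ^ m - 1) = 1 := by
      have h1 : c ^ (2 ^ m - 1) = 1 := by
        have := FiniteField.pow_card_sub_one_eq_one c hc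
        rwa [hF] at this
      ext
      push_cast [hu]
      exact h1
    have h3z : ((3 : ℕ) : ℤ) = ((2 ^ k + 1 : ℕ) : ℤ) * (A * e) + ((2 ^ m - 1 : ℕ) : ℤ) * (B * e) := by
      rw [he]
      push_cast [hbez]
      ring
    have hX : u ^ (((2 ^ k + 1 : ℕ) : ℤ) * (A * e)) = (u ^ (A * e)) ^ (2 ^ k + 1 : ℕ) := by
      rw [mul_comm, zpow_mul, zpow_natCast]
    have hY : u ^ (((2 ^ m - 1 : ℕ) : ℤ) * (B * e)) = 1 := by
      rw [zpow_mul, zpow_natCast, hcard, one_zpow]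
    have hu3 : u ^ (3 : ℕ) = (u ^ (A * e)) ^ (2 ^ k + 1 : ℕ) := by
      rw [← zpow_natCast u 3, h3z, zpow_add, hX, hY, mul_one]
    refine ⟨((u ^ (A * e) : Fˣ) : F), Units.ne_zero _, ?_⟩
    calc ((u ^ (A * e) : Fˣ) : F) ^ (2 ^ k + 1) = ((( u ^ (A * e)) ^ (2 ^ k + 1 : ℕ) : Fˣ) : F) :=
        rfl
      _ = ((u ^ (3 : ℕ) : Fˣ) : F) := by rw [hu3]
      _ = c ^ 3 := rfl
  -- key B: there is t with t^(2^k) + t ≠ 0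
  have keyB : ∃ t : F, t ^ (2 ^ k) + t ≠ 0 := by
    have hcard4 : 4 ≤ Fintype.card F := by
      rw [hF]
      calc (4 : ℕ) = 2 ^ 2 := rfl
        _ ≤ 2 ^ m := Nat.pow_le_pow_right (by norm_num) hm2
    obtain ⟨t, ht0, ht1⟩ : ∃ t : F, t ≠ 0 ∧ t ≠ 1 := by
      by_contra hcon
      push_neg at hcon
      have hsub : (Finset.univ : Finset F) ⊆ {0, 1} := by
        intro x _
        simp only [Finset.mem_insert, Finset.mem_singleton]
        by_cases h : x = 0
        · exact Or.inl h
        · exact Or.inr (hcon x h)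
      have hle := Finset.card_le_card hsub
      have h2 : ({0, 1} : Finset F).card ≤ 2 :=
        (Finset.card_insert_le _ _).trans (by simp)
      rw [Finset.card_univ] at hle
      omega
    refine ⟨t, fun h => ht1 ?_⟩
    have htt : t ^ (2 ^ k) = t := by
      have := eq_neg_of_add_eq_zero_left h
      rwa [CharTwo.neg_eq] at this
    have hp1 : t ^ (2 ^ k - 1) = 1 := by
      have h2 : t ^ (2 ^ k - 1) * t = t ^ (2 ^ k) := by
        rw [← pow_succ]; congr 1; omega
      rw [htt] at h2
      have := mul_right_cancel₀ ht0 (h2.trans (one_mul t).symm)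
      exact this
    have hp2 : t ^ (2 ^ m - 1) = 1 := by
      have := FiniteField.pow_card_sub_one_eq_one t ht0
      rwa [hF] at this
    have hg := (pow_gcd_eq_one (a := t)).mpr ⟨hp1, hp2⟩
    have hgd : Nat.gcd (2 ^ k - 1) (2 ^ m - 1) ∣ 1 := by
      have hdpos : 0 < Nat.gcd (2 ^ k - 1) (2 ^ m - 1) := by
        apply Nat.gcd_pos_of_pos_left
        have : 2 ≤ 2 ^ k := by
          calc (2 : ℕ) = 2 ^ 1 := rfl
            _ ≤ 2 ^ k := Nat.pow_le_pow_right (by norm_num) hk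
        omega
      have h := gcd_two_pow_sub_one_dvd _ k m hdpos (Nat.gcd_dvd_left _ _) (Nat.gcd_dvd_right _ _)
      rwa [hgcd, pow_one] at h
    rw [Nat.dvd_one.mp hgd, pow_one] at hg
    exact hg
  obtain ⟨c1, hc1⟩ := h3k
  obtain ⟨c2, hc2⟩ := h3j
  -- main set equality
  have hSeq : ({w : F | ∃ a t : F, t ^ (2 ^ k) + t ≠ 0 ∧
        w = a ^ (2 ^ k + 1) * ((t ^ (2 ^ k) + t)⁻¹) ^ (2 ^ j - 1)} ∪ {0}) =
      insert (0 : F) {x : F | ∃ y : F, y ≠ 0 ∧ x = y ^ 3} := by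
    ext w
    simp only [Set.mem_union, Set.mem_setOf_eq, Set.mem_singleton_iff, Set.mem_insert_iff]
    constructor
    · rintro (⟨a, t, hz, rfl⟩ | rfl)
      · by_cases ha : a = 0
        · left
          simp [ha]
        · right
          refine ⟨a ^ c1 * ((t ^ (2 ^ k) + t)⁻¹) ^ c2,
            mul_ne_zero (pow_ne_zero _ ha) (pow_ne_zero _ (inv_ne_zero hz)), ?_⟩
          rw [mul_pow, ← pow_mul, ← pow_mul, mul_comm c1 3, mul_comm c2 3, ← hc1, ← hc2]
      · left; rfl
    · rintro (rfl | ⟨y, hy, rfl⟩)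
      · right; rfl
      · left
        obtain ⟨t, hz⟩ := keyB
        set z := t ^ (2 ^ k) + t with hzdef
        obtain ⟨a, ha0, ha⟩ := keyA (y * z ^ c2) (mul_ne_zero hy (pow_ne_zero _ hz))
        refine ⟨a, t, hz, ?_⟩
        rw [ha, inv_pow, hc2, mul_pow, ← pow_mul, mul_comm c2 3, ← hc2, hc2, mul_assoc,
          mul_inv_cancel₀ (pow_ne_zero _ hz), mul_one]
  refine ⟨hSeq, fun α hα => ?_⟩
  rw [hSeq]
  simp [Set.mem_insert_iff, Set.mem_setOf_eq, hα]
  exact ⟨fun h x hx hx' => h ⟨x, hx, hx'⟩, fun h ⟨x, hx, hx'⟩ => h x hx hx'⟩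
end
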